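/- arXiv:1411.0505 — 4 statements merged into one kernel-verified Lean document; each statement's English description precedes it below -/
import Mathlib

section
/- Assume the set D of primitive Matchings is infinite, and let w₁, w₂, w₃, … be an enumeration of D with nondecreasing lengths. For each N ≥ 1 let F_N be the attractor of the finite IFS {φ_{w₁},…,φ_{w_N}}. Then F₁ ⊆ F₂ ⊆ F₃ ⊆ ⋯ and closure( ⋃_{N=1}^{∞} F_N ) = K₁+K₂. -/
open Finset Pointwise

/-- The block `(0,…,0, β^k * a)` of length `k` associated to the similitude
`x ↦ x/β^k + a`. -/
noncomputable def digitBlock (β : ℝ) (k : ℕ) (a : ℝ) : List ℝ :=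
  List.replicate (k - 1) 0 ++ [β ^ k * a]

/-- `w` is a Matching generated by the digital sets `P` and `Q`: it is the coordinatewise
sum of a concatenation of blocks from `P` and a concatenation of blocks from `Q`
having the same total length as `w`. -/
def IsMatching {n m : ℕ} (P : Fin n → List ℝ) (Q : Fin m → List ℝ) (w : List ℝ) : Prop :=
  ∃ (is : List (Fin n)) (js : List (Fin m)),
    is ≠ [] ∧ js ≠ [] ∧
    (is.map P).flatten.length = w.length ∧
    (js.map Q).flatten.length = w.length ∧
    w = List.zipWith (· + ·) (is.map P).flatten (js.map Q).flatten

/-- A Matching is primitive if it is not a concatenation of two or more shorter Matchings. -/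
def IsPrimMatching {n m : ℕ} (P : Fin n → List ℝ) (Q : Fin m → List ℝ) (w : List ℝ) : Prop :=
  IsMatching P Q w ∧
    ¬ ∃ u v : List ℝ, u ≠ [] ∧ v ≠ [] ∧ IsMatching P Q u ∧ IsMatching P Q v ∧ w = u ++ v

/-- The value `Σ_{i=1}^{L} c_i β^{-i}` of the block `w = (c_1,…,c_L)` in base `β`. -/
noncomputable def blockVal (β : ℝ) (w : List ℝ) : ℝ :=
  ∑ i : Fin w.length, w.get i / β ^ (i.1 + 1)

/-- The similitude `φ_w(x) = x/β^{|w|} + Σ_i c_i β^{-i}` associated to a block `w`. -/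
noncomputable def phiBlock (β : ℝ) (w : List ℝ) (x : ℝ) : ℝ :=
  x / β ^ w.length + blockVal β w

/-- `x : ℕ → ℝ` (indexed from 0, representing `(x_k)_{k ≥ 1}`) is the infinite
concatenation of the nonempty blocks `W 0, W 1, …`. -/
def IsConcatSeq (W : ℕ → List ℝ) (x : ℕ → ℝ) : Prop :=
  (∀ t, W t ≠ []) ∧
    ∀ (t : ℕ) (i : Fin (W t).length),
      x ((∑ s ∈ Finset.range t, (W s).length) + i) = (W t).get i

/-- `x` is an infinite concatenation of blocks from the family `Ws`. -/
def IsInfConcatFrom (Ws : Set (List ℝ)) (x : ℕ → ℝ) : Prop :=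
  ∃ W : ℕ → List ℝ, (∀ t, W t ∈ Ws) ∧ IsConcatSeq W x

/-- The value `Σ_{k=1}^{∞} x_k β^{-k}` of a sequence (indexed from 0). -/
noncomputable def seqVal (β : ℝ) (x : ℕ → ℝ) : ℝ :=
  ∑' k : ℕ, x k / β ^ (k + 1)

/-- The set `E` of values of infinite concatenations of Matchings. -/
def Eset {n m : ℕ} (β : ℝ) (P : Fin n → List ℝ) (Q : Fin m → List ℝ) : Set ℝ :=
  {z | ∃ x : ℕ → ℝ, IsInfConcatFrom {w | IsMatching P Q w} x ∧ z = seqVal β x}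

/-- `a` is a coding: the coordinatewise sum of an infinite concatenation of blocks from
`P` and an infinite concatenation of blocks from `Q`. -/
def IsCoding {n m : ℕ} (P : Fin n → List ℝ) (Q : Fin m → List ℝ) (a : ℕ → ℝ) : Prop :=
  ∃ x y : ℕ → ℝ, IsInfConcatFrom (Set.range P) x ∧ IsInfConcatFrom (Set.range Q) y ∧
    ∀ k, a k = x k + y k

/-- The set `C` of codings having a tail containing no segment that is a Matching. -/
def Cset {n m : ℕ} (P : Fin n → List ℝ) (Q : Fin m → List ℝ) : Set (ℕ → ℝ) :=
  {a | IsCoding P Q a ∧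
    ∃ N : ℕ, ∀ j ≥ N, ∀ l : ℕ, 1 ≤ l →
      ¬ IsMatching P Q (List.ofFn fun i : Fin l => a (j + i))}
section Basic

variable {β : ℝ}

lemma blockVal_nil : blockVal β [] = 0 := by
  simp [blockVal]

lemma blockVal_cons (c : ℝ) (u : List ℝ) :
    blockVal β (c :: u) = c / β + blockVal β u / β := by
  unfold blockVal
  show (∑ i : Fin (u.length + 1), (c :: u).get i / β ^ (i.1 + 1)) = _
  rw [Fin.sum_univ_succ, Finset.sum_div]
  congr 1
  · simp
  · apply Finset.sum_congr rfl
    intro i _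
    simp [pow_succ, div_div]

lemma blockVal_append (hβ : β ≠ 0) (u v : List ℝ) :
    blockVal β (u ++ v) = blockVal β u + blockVal β v / β ^ u.length := by
  induction u with
  | nil => simp [blockVal_nil]
  | cons c u ih =>
    rw [List.cons_append, blockVal_cons, blockVal_cons, ih]
    rw [List.length_cons, pow_succ]
    field_simp
    ring

lemma phiBlock_nil (x : ℝ) : phiBlock β [] x = x := by
  simp [phiBlock, blockVal_nil]

lemma phiBlock_append (hβ : β ≠ 0) (u v : List ℝ) (x : ℝ) :
    phiBlock β (u ++ v) x = phiBlock β u (phiBlock β v x) := by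
  unfold phiBlock
  rw [blockVal_append hβ, List.length_append, pow_add]
  field_simp
  ring

lemma blockVal_zipWith :
    ∀ (u v : List ℝ), u.length = v.length →
      blockVal β (List.zipWith (· + ·) u v) = blockVal β u + blockVal β v := by
  intro u
  induction u with
  | nil => intro v hv; simp [blockVal_nil, (List.length_eq_zero_iff.mp hv.symm)]
  | cons c u ih =>
    intro v hv
    cases v with
    | nil => simp at hv
    | cons d v =>
      simp only [List.zipWith_cons_cons, blockVal_cons]
      rw [ih v (by simpa using hv)]
      ring

lemma phiBlock_zipWith (u v : List ℝ) (h : u.length = v.length) (x y : ℝ) :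
    phiBlock β (List.zipWith (· + ·) u v) (x + y) = phiBlock β u x + phiBlock β v y := by
  unfold phiBlock
  rw [blockVal_zipWith u v h, List.length_zipWith, h, min_self, ← h]
  ring

lemma length_digitBlock {k : ℕ} (hk : 1 ≤ k) (a : ℝ) :
    (digitBlock β k a).length = k := by
  simp [digitBlock]
  omega

lemma blockVal_replicate_zero (k : ℕ) : blockVal β (List.replicate k 0) = 0 := by
  induction k with
  | zero => simp [blockVal_nil]
  | succ k ih => rw [List.replicate_succ, blockVal_cons, ih]; simp

lemma blockVal_digitBlock (hβ : β ≠ 0) {k : ℕ} (hk : 1 ≤ k) (a : ℝ) :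
    blockVal β (digitBlock β k a) = a := by
  unfold digitBlock
  rw [blockVal_append hβ, blockVal_replicate_zero, blockVal_cons, blockVal_nil]
  rw [List.length_replicate]
  have : β ^ k = β ^ (k - 1) * β := by
    rw [← pow_succ]; congr 1; omega
  rw [this]
  field_simp
  ring

lemma phiBlock_sub (u : List ℝ) (x y : ℝ) :
    phiBlock β u x - phiBlock β u y = (x - y) / β ^ u.length := by
  unfold phiBlock; ring

end Basic
section Ctx

variable {β : ℝ}

/-- estimate helper -/
lemma est_helper (hβ : 1 < β) {t L : ℕ} (hL : t ≤ L) {c D : ℝ} (hD : 0 ≤ D) (hc : |c| ≤ D) :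
    |c / β ^ L| ≤ D * (1 / β) ^ t := by
  have hb0 : (0:ℝ) < β := lt_trans one_pos hβ
  have h1 : |c / β ^ L| = |c| / β ^ L := by
    rw [abs_div, abs_pow, abs_of_pos hb0]
  rw [h1, one_div, inv_pow, ← div_eq_mul_inv]
  exact div_le_div₀ hD hc (pow_pos hb0 t) (pow_le_pow_right₀ hβ.le hL)

/-- invariance of `K` under compositions of the maps `phiBlock β (V i)`. -/
lemma phi_flatten_mem {ν : ℕ} (hβ0 : β ≠ 0) {K : Set ℝ} {V : Fin ν → List ℝ}
    (hK : ∀ i, ∀ x ∈ K, phiBlock β (V i) x ∈ K) :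
    ∀ (is : List (Fin ν)) (x), x ∈ K → phiBlock β ((is.map V).flatten) x ∈ K := by
  intro is
  induction is with
  | nil => intro x hx; simpa [phiBlock_nil] using hx
  | cons i is ih =>
    intro x hx
    rw [List.map_cons, List.flatten_cons, phiBlock_append hβ0]
    exact hK i _ (ih x hx)

/-- every point of the attractor is in a `t`-fold image of the attractor. -/
lemma expand_mem {ν : ℕ} (hβ0 : β ≠ 0) {K : Set ℝ} {V : Fin ν → List ℝ}
    (hK : K = ⋃ i : Fin ν, phiBlock β (V i) '' K) :
    ∀ (t : ℕ) (x), x ∈ K → ∃ is : List (Fin ν), is.length = t ∧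
      ∃ x₂ ∈ K, x = phiBlock β ((is.map V).flatten) x₂ := by
  intro t
  induction t with
  | zero =>
    intro x hx
    exact ⟨[], rfl, x, hx, by simp [phiBlock_nil]⟩
  | succ t ih =>
    intro x hx
    rw [hK] at hx
    simp only [Set.mem_iUnion, Set.mem_image] at hx
    obtain ⟨i, x₁, hx₁, hxeq⟩ := hx
    obtain ⟨is, hlen, x₂, hx₂, hrep⟩ := ih x₁ hx₁
    refine ⟨i :: is, by simp [hlen], x₂, hx₂, ?_⟩
    rw [List.map_cons, List.flatten_cons, phiBlock_append hβ0, ← hrep, hxeq]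

/-- minimality of the attractor among invariant closed sets. -/
lemma attractor_min (hβ : 1 < β) {ν : ℕ} (T : Fin ν → List ℝ) (hT : ∀ i, 1 ≤ (T i).length)
    {A S : Set ℝ} (hAc : IsCompact A)
    (hA : A = ⋃ i : Fin ν, phiBlock β (T i) '' A)
    (hSne : S.Nonempty) (hSc : IsClosed S)
    (hSinv : ∀ i, ∀ s ∈ S, phiBlock β (T i) s ∈ S) : A ⊆ S := by
  have hβ0 : β ≠ 0 := by positivity
  intro z hz
  obtain ⟨s₀, hs₀⟩ := hSne
  obtain ⟨C, hC⟩ := (hAc.isBounded).subset_closedBall s₀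
  have hC0 : 0 ≤ C := by
    have := hC hz
    simp only [Metric.mem_closedBall] at this
    exact le_trans dist_nonneg this
  have key : ∀ t : ℕ, ∃ B : List ℝ, t ≤ B.length ∧
      (∃ z' ∈ A, z = phiBlock β B z') ∧ (∀ s ∈ S, phiBlock β B s ∈ S) := by
    intro t
    induction t with
    | zero => exact ⟨[], by simp, ⟨z, hz, by simp [phiBlock_nil]⟩, fun s hs => by
        simpa [phiBlock_nil] using hs⟩
    | succ t ih =>
      obtain ⟨B, hBlen, ⟨z', hz', hrep⟩, hBinv⟩ := ih
      have hz'' := hz'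
      rw [hA] at hz''
      simp only [Set.mem_iUnion, Set.mem_image] at hz''
      obtain ⟨i, z₂, hz₂, hzeq⟩ := hz''
      refine ⟨B ++ T i, ?_, ⟨z₂, hz₂, ?_⟩, ?_⟩
      · rw [List.length_append]
        have := hT i
        omega
      · rw [phiBlock_append hβ0, hzeq, hrep]
      · intro s hs
        rw [phiBlock_append hβ0]
        exact hBinv _ (hSinv i s hs)
  rw [← hSc.closure_eq]
  rw [Metric.mem_closure_iff]
  intro ε hε
  have htend : Filter.Tendsto (fun t : ℕ => (C + 1) * (1 / β) ^ t) Filter.atTop (nhds 0) := by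
    have h1 : |1 / β| < 1 := by
      rw [abs_of_pos (by positivity)]
      rw [div_lt_one (by positivity)]
      exact hβ
    simpa using (tendsto_pow_atTop_nhds_zero_of_abs_lt_one h1).const_mul (C + 1)
  obtain ⟨t, ht⟩ := (htend.eventually (gt_mem_nhds hε)).exists
  obtain ⟨B, hBlen, ⟨z', hz', hrep⟩, hBinv⟩ := key t
  refine ⟨phiBlock β B s₀, hBinv s₀ hs₀, ?_⟩
  rw [Real.dist_eq, hrep, phiBlock_sub]
  calc |(z' - s₀) / β ^ B.length| ≤ C * (1/β)^t := by
        apply est_helper hβ hBlen hC0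
        have := hC hz'
        simp only [Metric.mem_closedBall, Real.dist_eq] at this
        exact this
    _ ≤ (C+1) * (1/β)^t := by
        apply mul_le_mul_of_nonneg_right (by linarith) (by positivity)
    _ < ε := ht

end Ctx
section Match

variable {β : ℝ} {n m : ℕ} {nv : Fin n → ℕ} {a : Fin n → ℝ} {mv : Fin m → ℕ} {b : Fin m → ℝ}
  {P : Fin n → List ℝ} {Q : Fin m → List ℝ}

lemma length_P (hP : P = fun i => digitBlock β (nv i) (a i)) (hnv : ∀ i, 0 < nv i) (i : Fin n) :
    (P i).length = nv i := by
  rw [hP]; exact length_digitBlock (hnv i) _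

lemma length_flatten_map_P (hP : P = fun i => digitBlock β (nv i) (a i)) (hnv : ∀ i, 0 < nv i)
    (is : List (Fin n)) : ((is.map P).flatten).length = (is.map nv).sum := by
  rw [List.length_flatten, List.map_map]
  congr 1
  apply List.map_congr_left
  intro i _
  exact length_P hP hnv i

lemma len_le_sum (hnv : ∀ i, 0 < nv i) (is : List (Fin n)) :
    is.length ≤ (is.map nv).sum := by
  induction is with
  | nil => simp
  | cons i is ih =>
    rw [List.map_cons, List.sum_cons, List.length_cons]
    have := hnv i
    omega

lemma matching_length_pos (hP : P = fun i => digitBlock β (nv i) (a i)) (hnv : ∀ i, 0 < nv i)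
    {u : List ℝ} (hu : IsMatching P Q u) : 1 ≤ u.length := by
  obtain ⟨is, js, his, hjs, hlen1, hlen2, hrep⟩ := hu
  rw [← hlen1, length_flatten_map_P hP hnv]
  have h1 : 1 ≤ is.length := by
    cases is with
    | nil => exact absurd rfl his
    | cons _ _ => simp
  exact le_trans h1 (len_le_sum hnv is)

lemma matching_decomp (hP : P = fun i => digitBlock β (nv i) (a i)) (hnv : ∀ i, 0 < nv i) :
    ∀ (k : ℕ) (u : List ℝ), u.length ≤ k → IsMatching P Q u →
      ∃ l : List (List ℝ), (∀ v ∈ l, IsPrimMatching P Q v) ∧ u = l.flatten := by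
  intro k
  induction k with
  | zero =>
    intro u hul hu
    have := matching_length_pos hP hnv hu
    omega
  | succ k ih =>
    intro u hul hu
    by_cases hprim : IsPrimMatching P Q u
    · exact ⟨[u], by simpa using hprim, by simp⟩
    · have hsplit : ∃ u₁ u₂ : List ℝ, u₁ ≠ [] ∧ u₂ ≠ [] ∧ IsMatching P Q u₁ ∧
          IsMatching P Q u₂ ∧ u = u₁ ++ u₂ := by
        by_contra hcon
        exact hprim ⟨hu, hcon⟩
      obtain ⟨u₁, u₂, h1, h2, hm1, hm2, heq⟩ := hsplit
      have hl1 : 1 ≤ u₁.length := matching_length_pos hP hnv hm1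
      have hl2 : 1 ≤ u₂.length := matching_length_pos hP hnv hm2
      have hlen : u₁.length + u₂.length = u.length := by rw [heq, List.length_append]
      obtain ⟨l₁, hpl₁, hfl₁⟩ := ih u₁ (by omega) hm1
      obtain ⟨l₂, hpl₂, hfl₂⟩ := ih u₂ (by omega) hm2
      refine ⟨l₁ ++ l₂, ?_, ?_⟩
      · intro v hv
        rcases List.mem_append.mp hv with h | h
        · exact hpl₁ v h
        · exact hpl₂ v h
      · rw [heq, hfl₁, hfl₂, List.flatten_append]

end Match
section Group

lemma sum_map_flatten_replicate {α γ : Type*} [AddCommMonoid γ] (f : α → γ) (k : ℕ) (J : List α) :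
    (((List.replicate k J).flatten).map f).sum = k • (J.map f).sum := by
  induction k with
  | zero => simp
  | succ k ih =>
    rw [List.replicate_succ, List.flatten_cons, List.map_append, List.sum_append, ih, succ_nsmul]
    abel

lemma sum_map_replicate {α : Type*} (f : α → ℕ) (k : ℕ) (j : α) :
    ((List.replicate k j).map f).sum = k * f j := by
  rw [List.map_replicate, List.sum_replicate, smul_eq_mul]

lemma neg_mem_diffs {n m : ℕ} (hn : 0 < n) (hm : 0 < m)
    (nv : Fin n → ℕ) (hnv : ∀ i, 0 < nv i) (mv : Fin m → ℕ) (hmv : ∀ j, 0 < mv j)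
    (d : ℤ) (J : List (Fin m)) (I : List (Fin n))
    (hd : d = ((J.map mv).sum : ℤ) - ((I.map nv).sum : ℤ)) :
    ∃ (J' : List (Fin m)) (I' : List (Fin n)),
      (-d : ℤ) = ((J'.map mv).sum : ℤ) - ((I'.map nv).sum : ℤ) := by
  set i₀ : Fin n := ⟨0, hn⟩
  set j₀ : Fin m := ⟨0, hm⟩
  set A := mv j₀ with hA
  set B := nv i₀ with hB
  have hA1 : 1 ≤ A := hmv j₀
  have hB1 : 1 ≤ B := hnv i₀
  have hAB : 1 ≤ A * B := Nat.one_le_iff_ne_zero.mpr (by positivity)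
  rcases le_or_gt 0 d with hd0 | hd0
  · refine ⟨(List.replicate (A*B-1) J).flatten,
      (List.replicate (A*B-1) I).flatten ++ List.replicate (A * d.toNat) i₀, ?_⟩
    rw [List.map_append, List.sum_append, sum_map_flatten_replicate,
      sum_map_flatten_replicate, sum_map_replicate]
    have hdt : (d.toNat : ℤ) = d := Int.toNat_of_nonneg hd0
    push_cast [smul_eq_mul, Nat.cast_sub hAB] at hd ⊢
    rw [hdt]
    linear_combination ((A:ℤ) * (B:ℤ) - 1) * hd
  · refine ⟨(List.replicate (A*B-1) J).flatten ++ List.replicate (B * (-d).toNat) j₀,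
      (List.replicate (A*B-1) I).flatten, ?_⟩
    rw [List.map_append, List.sum_append, sum_map_flatten_replicate,
      sum_map_flatten_replicate, sum_map_replicate]
    have hdt : ((-d).toNat : ℤ) = -d := Int.toNat_of_nonneg (by omega)
    push_cast [smul_eq_mul, Nat.cast_sub hAB] at hd ⊢
    rw [hdt]
    linear_combination ((A:ℤ) * (B:ℤ) - 1) * hd

end Group
section Aux

lemma exists_bound_index {w : ℕ → List ℝ} {Ds : Set (List ℝ)} (hwr : Set.range w = Ds) :
    ∀ l : List (List ℝ), (∀ v ∈ l, v ∈ Ds) → ∃ N, ∀ v ∈ l, ∃ i ≤ N, w i = v := by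
  intro l
  induction l with
  | nil => intro _; exact ⟨0, by simp⟩
  | cons v l ih =>
    intro h
    obtain ⟨N, hN⟩ := ih (fun v hv => h v (List.mem_cons_of_mem _ hv))
    have hv : v ∈ Set.range w := by rw [hwr]; exact h v List.mem_cons_self
    obtain ⟨i₀, hi₀⟩ := hv
    refine ⟨max i₀ N, ?_⟩
    intro v' hv'
    rcases List.mem_cons.mp hv' with h' | h'
    · exact ⟨i₀, le_max_left _ _, h' ▸ hi₀⟩
    · obtain ⟨i, hi, hwi⟩ := hN v' h'
      exact ⟨i, le_trans hi (le_max_right _ _), hwi⟩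

lemma phi_prim_list_mem {β : ℝ} (hβ0 : β ≠ 0) {Fs : Set ℝ} {w : ℕ → List ℝ} {N : ℕ}
    (hinv : ∀ i ≤ N, ∀ s ∈ Fs, phiBlock β (w i) s ∈ Fs) :
    ∀ l : List (List ℝ), (∀ v ∈ l, ∃ i ≤ N, w i = v) → ∀ s ∈ Fs,
      phiBlock β l.flatten s ∈ Fs := by
  intro l
  induction l with
  | nil => intro _ s hs; simpa [phiBlock_nil] using hs
  | cons v l ih =>
    intro h s hs
    rw [List.flatten_cons, phiBlock_append hβ0]
    obtain ⟨i, hi, hwi⟩ := h v List.mem_cons_self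
    rw [← hwi]
    exact hinv i hi _ (ih (fun v' hv' => h v' (List.mem_cons_of_mem _ hv')) s hs)

end Aux

/-- if the set `D` of primitive Matchings is infinite and `w 0, w 1, …` is an
enumeration of `D` with nondecreasing lengths, and `F N` is the attractor of the finite IFS
of the first `N+1` similitudes, then `(F N)` is increasing and `closure(⋃ N, F N) = K₁+K₂`. -/
theorem statement14 (β : ℝ) (hβ : 1 < β) (n m : ℕ) (hn : 0 < n) (hm : 0 < m)
    (nv : Fin n → ℕ) (hnv : ∀ i, 0 < nv i) (a : Fin n → ℝ)
    (mv : Fin m → ℕ) (hmv : ∀ j, 0 < mv j) (b : Fin m → ℝ)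
    (K₁ K₂ : Set ℝ)
    (hK₁ne : K₁.Nonempty) (hK₁c : IsCompact K₁)
    (hK₁ : K₁ = ⋃ i : Fin n, (fun x => x / β ^ nv i + a i) '' K₁)
    (hK₂ne : K₂.Nonempty) (hK₂c : IsCompact K₂)
    (hK₂ : K₂ = ⋃ j : Fin m, (fun x => x / β ^ mv j + b j) '' K₂)
    (P : Fin n → List ℝ) (Q : Fin m → List ℝ)
    (hP : P = fun i => digitBlock β (nv i) (a i))
    (hQ : Q = fun j => digitBlock β (mv j) (b j))
    (hDinf : {w : List ℝ | IsPrimMatching P Q w}.Infinite)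
    (w : ℕ → List ℝ) (hwinj : Function.Injective w)
    (hwrange : Set.range w = {w : List ℝ | IsPrimMatching P Q w})
    (hwmono : Monotone fun N => (w N).length)
    (F : ℕ → Set ℝ) (hFne : ∀ N, (F N).Nonempty) (hFc : ∀ N, IsCompact (F N))
    (hF : ∀ N, F N = ⋃ i : Fin (N + 1), phiBlock β (w i) '' F N) :
    Monotone F ∧ closure (⋃ N, F N) = K₁ + K₂ := by
  have hβ0 : β ≠ 0 := by positivity
  -- the maps f_i, g_j agree with phiBlock of their blocks
  have hfP : ∀ i : Fin n, (fun x : ℝ => x / β ^ nv i + a i) = phiBlock β (P i) := by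
    intro i; funext x
    rw [hP]
    simp only [phiBlock]
    rw [length_digitBlock (hnv i), blockVal_digitBlock hβ0 (hnv i)]
  have hgQ : ∀ j : Fin m, (fun x : ℝ => x / β ^ mv j + b j) = phiBlock β (Q j) := by
    intro j; funext x
    rw [hQ]
    simp only [phiBlock]
    rw [length_digitBlock (hmv j), blockVal_digitBlock hβ0 (hmv j)]
  have hK₁' : K₁ = ⋃ i : Fin n, phiBlock β (P i) '' K₁ := by
    simp_rw [← hfP]; exact hK₁
  have hK₂' : K₂ = ⋃ j : Fin m, phiBlock β (Q j) '' K₂ := by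
    simp_rw [← hgQ]; exact hK₂
  have hK1inv : ∀ i : Fin n, ∀ x ∈ K₁, phiBlock β (P i) x ∈ K₁ := by
    intro i x hx
    rw [hK₁']
    exact Set.mem_iUnion.mpr ⟨i, ⟨x, hx, rfl⟩⟩
  have hK2inv : ∀ j : Fin m, ∀ y ∈ K₂, phiBlock β (Q j) y ∈ K₂ := by
    intro j y hy
    rw [hK₂']
    exact Set.mem_iUnion.mpr ⟨j, ⟨y, hy, rfl⟩⟩
  -- matchings map K₁+K₂ into itself
  have hMinv : ∀ u : List ℝ, IsMatching P Q u → ∀ s ∈ K₁ + K₂,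
      phiBlock β u s ∈ K₁ + K₂ := by
    intro u hu s hs
    obtain ⟨is, js, his, hjs, hl1, hl2, hrep⟩ := hu
    rw [Set.mem_add] at hs
    obtain ⟨xs, hxs, ys, hys, hxy⟩ := hs
    rw [← hxy, hrep, phiBlock_zipWith _ _ (by rw [hl1, hl2])]
    exact Set.add_mem_add (phi_flatten_mem hβ0 hK1inv is xs hxs)
      (phi_flatten_mem hβ0 hK2inv js ys hys)
  have hwprim : ∀ N, IsPrimMatching P Q (w N) := by
    intro N
    have := Set.mem_range_self (f := w) N
    rw [hwrange] at this
    exact this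
  have hwlen : ∀ N, 1 ≤ (w N).length := fun N => matching_length_pos hP hnv (hwprim N).1
  have hFinv : ∀ N i, i ≤ N → ∀ s ∈ F N, phiBlock β (w i) s ∈ F N := by
    intro N i hi s hs
    rw [hF N]
    exact Set.mem_iUnion.mpr ⟨⟨i, by omega⟩, ⟨s, hs, rfl⟩⟩
  have hmono : Monotone F := by
    intro N M hNM
    refine attractor_min hβ (fun i : Fin (N+1) => w i) (fun i => hwlen i) (hFc N) (hF N)
      (hFne M) (hFc M).isClosed ?_
    intro i s hs
    have := i.isLt
    exact hFinv M i (by omega) s hs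
  have hKsum_c : IsCompact (K₁ + K₂) := hK₁c.add hK₂c
  have hFsub : ∀ N, F N ⊆ K₁ + K₂ := by
    intro N
    refine attractor_min hβ (fun i : Fin (N+1) => w i) (fun i => hwlen i) (hFc N) (hF N)
      (hK₁ne.add hK₂ne) hKsum_c.isClosed ?_
    intro i s hs
    exact hMinv (w i) (hwprim i).1 s hs
  have hsub : closure (⋃ N, F N) ⊆ K₁ + K₂ :=
    closure_minimal (Set.iUnion_subset hFsub) hKsum_c.isClosed
  -- the reverse inclusion
  have hsup : K₁ + K₂ ⊆ closure (⋃ N, F N) := by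
    intro z hz
    rw [Set.mem_add] at hz
    obtain ⟨x, hx, y, hy, hxy⟩ := hz
    obtain ⟨xst, hxst⟩ := hK₁ne
    obtain ⟨yst, hyst⟩ := hK₂ne
    rw [Metric.mem_closure_iff]
    intro ε hε
    -- a uniform bound
    obtain ⟨C₁, hC₁⟩ := hK₁c.isBounded.subset_closedBall 0
    obtain ⟨C₂, hC₂⟩ := hK₂c.isBounded.subset_closedBall 0
    set C := max C₁ C₂ with hCdef
    have hb1 : ∀ v ∈ K₁, |v| ≤ C := by
      intro v hv
      have := hC₁ hv
      simp only [Metric.mem_closedBall, Real.dist_eq, sub_zero] at this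
      exact le_trans this (le_max_left _ _)
    have hb2 : ∀ v ∈ K₂, |v| ≤ C := by
      intro v hv
      have := hC₂ hv
      simp only [Metric.mem_closedBall, Real.dist_eq, sub_zero] at this
      exact le_trans this (le_max_right _ _)
    have hC0 : 0 ≤ C := le_trans (abs_nonneg xst) (hb1 xst hxst)
    have hbsum : ∀ v ∈ K₁ + K₂, |v| ≤ 2 * C := by
      intro v hv
      rw [Set.mem_add] at hv
      obtain ⟨xs, hxs, ys, hys, hv⟩ := hv
      rw [← hv]
      calc |xs + ys| ≤ |xs| + |ys| := abs_add_le _ _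
        _ ≤ 2 * C := by
            have := hb1 xs hxs; have := hb2 ys hys; linarith
    -- choose the precision
    have htend : Filter.Tendsto (fun t : ℕ => (8 * C + 1) * (1 / β) ^ t)
        Filter.atTop (nhds 0) := by
      have h1 : |1 / β| < 1 := by
        rw [abs_of_pos (by positivity), div_lt_one (by positivity)]
        exact hβ
      simpa using (tendsto_pow_atTop_nhds_zero_of_abs_lt_one h1).const_mul (8 * C + 1)
    obtain ⟨t, ht, ht1⟩ :=
      ((htend.eventually (gt_mem_nhds hε)).and (Filter.eventually_ge_atTop 1)).exists
    -- expand x and y to depth t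
    obtain ⟨is, hislen, x₂, hx₂, hxrep⟩ := expand_mem hβ0 hK₁' t x hx
    obtain ⟨js, hjslen, y₂, hy₂, hyrep⟩ := expand_mem hβ0 hK₂' t y hy
    have hpt : t ≤ (is.map nv).sum := by
      rw [← hislen]; exact len_le_sum hnv is
    have hqt : t ≤ (js.map mv).sum := by
      rw [← hjslen]; exact len_le_sum hmv js
    -- equalize the lengths
    obtain ⟨J', I', hJI⟩ := neg_mem_diffs hn hm nv hnv mv hmv
      (((js.map mv).sum : ℤ) - ((is.map nv).sum : ℤ)) js is rfl
    have hL : ((is ++ I').map nv).sum = ((js ++ J').map mv).sum := by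
      have : ((((is ++ I').map nv).sum : ℤ)) = ((((js ++ J').map mv).sum : ℤ)) := by
        have hJI' := hJI
        simp only [List.map_append, List.sum_append]
        push_cast at hJI' ⊢
        linarith [hJI']
      exact_mod_cast this
    set Bx := ((is ++ I').map P).flatten with hBxdef
    set By := ((js ++ J').map Q).flatten with hBydef
    have hBxlen : Bx.length = ((is ++ I').map nv).sum := length_flatten_map_P hP hnv _
    have hBylen : By.length = ((js ++ J').map mv).sum := length_flatten_map_P hQ hmv _
    have hBxBy : Bx.length = By.length := by rw [hBxlen, hBylen, hL]
    set u := List.zipWith (· + ·) Bx By with hudef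
    have hulen : u.length = Bx.length := by
      rw [hudef, List.length_zipWith, hBxBy, min_self]
    have hisne : is ≠ [] := by
      intro h
      rw [h] at hislen
      simp at hislen
      omega
    have hjsne : js ≠ [] := by
      intro h
      rw [h] at hjslen
      simp at hjslen
      omega
    have humatch : IsMatching P Q u := by
      refine ⟨is ++ I', js ++ J', ?_, ?_, ?_, ?_, rfl⟩
      · simp [hisne]
      · simp [hjsne]
      · rw [hulen]
      · rw [hulen, hBxBy]
    -- decompose into primitive matchings
    obtain ⟨l, hlprim, hlu⟩ := matching_decomp hP hnv u.length u le_rfl humatch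
    obtain ⟨N, hN⟩ := exists_bound_index hwrange l (fun v hv => hlprim v hv)
    obtain ⟨s, hs⟩ := hFne N
    have hsK : s ∈ K₁ + K₂ := hFsub N hs
    have hpmem : phiBlock β u s ∈ F N := by
      rw [hlu]
      exact phi_prim_list_mem hβ0 (fun i hi => hFinv N i hi) l hN s hs
    refine ⟨phiBlock β u s, Set.mem_iUnion.mpr ⟨N, hpmem⟩, ?_⟩
    rw [Real.dist_eq]
    -- the three error terms
    have hxsplit : Bx = (is.map P).flatten ++ (I'.map P).flatten := by
      rw [hBxdef, List.map_append, List.flatten_append]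
    have hysplit : By = (js.map Q).flatten ++ (J'.map Q).flatten := by
      rw [hBydef, List.map_append, List.flatten_append]
    have hxstar : phiBlock β ((I'.map P).flatten) xst ∈ K₁ :=
      phi_flatten_mem hβ0 hK1inv I' xst hxst
    have hystar : phiBlock β ((J'.map Q).flatten) yst ∈ K₂ :=
      phi_flatten_mem hβ0 hK2inv J' yst hyst
    have he1 : |x - phiBlock β Bx xst| ≤ 2 * C * (1 / β) ^ t := by
      rw [hxsplit, phiBlock_append hβ0, hxrep, phiBlock_sub]
      refine est_helper hβ ?_ (by linarith) ?_
      · rw [length_flatten_map_P hP hnv]; exact hpt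
      · calc |x₂ - phiBlock β ((I'.map P).flatten) xst| ≤ |x₂| + |phiBlock β ((I'.map P).flatten) xst| := abs_sub _ _
          _ ≤ 2 * C := by
              have := hb1 _ hx₂; have := hb1 _ hxstar; linarith
    have he2 : |y - phiBlock β By yst| ≤ 2 * C * (1 / β) ^ t := by
      rw [hysplit, phiBlock_append hβ0, hyrep, phiBlock_sub]
      refine est_helper hβ ?_ (by linarith) ?_
      · rw [length_flatten_map_P hQ hmv]; exact hqt
      · calc |y₂ - phiBlock β ((J'.map Q).flatten) yst| ≤ |y₂| + |phiBlock β ((J'.map Q).flatten) yst| := abs_sub _ _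
          _ ≤ 2 * C := by
              have := hb2 _ hy₂; have := hb2 _ hystar; linarith
    have hut : t ≤ u.length := by
      rw [hulen, hBxlen, List.map_append, List.sum_append]
      omega
    have he3 : |phiBlock β u (xst + yst) - phiBlock β u s| ≤ 4 * C * (1 / β) ^ t := by
      rw [phiBlock_sub]
      refine est_helper hβ hut (by linarith) ?_
      calc |xst + yst - s| ≤ |xst + yst| + |s| := abs_sub _ _
        _ ≤ 4 * C := by
            have h1 : |xst + yst| ≤ 2 * C := hbsum _ (Set.add_mem_add hxst hyst)
            have h2 : |s| ≤ 2 * C := hbsum _ hsK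
            linarith
    have hid : z - phiBlock β u s = (x - phiBlock β Bx xst) + (y - phiBlock β By yst)
        + (phiBlock β u (xst + yst) - phiBlock β u s) := by
      rw [← hxy, hudef, phiBlock_zipWith Bx By hBxBy xst yst]
      ring
    have hppos : (0:ℝ) < (1 / β) ^ t := by positivity
    calc |z - phiBlock β u s| = |(x - phiBlock β Bx xst) + (y - phiBlock β By yst)
          + (phiBlock β u (xst + yst) - phiBlock β u s)| := by rw [hid]
      _ ≤ |(x - phiBlock β Bx xst) + (y - phiBlock β By yst)|
          + |phiBlock β u (xst + yst) - phiBlock β u s| := abs_add_le _ _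
      _ ≤ |x - phiBlock β Bx xst| + |y - phiBlock β By yst|
          + |phiBlock β u (xst + yst) - phiBlock β u s| := by
            have := abs_add_le (x - phiBlock β Bx xst) (y - phiBlock β By yst)
            linarith
      _ ≤ 8 * C * (1 / β) ^ t := by linarith
      _ < (8 * C + 1) * (1 / β) ^ t := by nlinarith
      _ < ε := ht
  exact ⟨hmono, Set.Subset.antisymm hsub hsup⟩
end

section
/- Let K ⊂ ℝ be the attractor of the IFS {g₁(x) = x/3, g₂(x) = (x+8)/9}. Then dim_H(K+K) = (ln t₀)/(−ln 3), where t₀ is the smallest positive root of the polynomial equation t³ − t² − 2t + 1 = 0. -/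
open Set
open scoped ENNReal NNReal

namespace St16

def tgt : Fin 5 → Bool := ![false, true, false, false, true]
def mm : Fin 5 → ℕ := ![1, 2, 2, 1, 2]
def cc : Fin 5 → ℝ := ![0, 8, 16, 8, 32]
def hl : Bool → ℝ := fun q => if q then 4 else 2
def edges : Bool → Finset (Fin 5) := fun q => if q then Finset.univ else {0, 1, 2}
noncomputable def fe (e : Fin 5) (y : ℝ) : ℝ := (y + cc e) / 3 ^ (mm e)

noncomputable def fmap : List (Fin 5) → ℝ → ℝ
  | [], y => y
  | e :: w, y => fe e (fmap w y)

def Mw : List (Fin 5) → ℕ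
  | [] => 0
  | e :: w => mm e + Mw w

def fin : Bool → List (Fin 5) → Bool
  | q, [] => q
  | _, e :: w => fin (tgt e) w

def lvl : Bool → ℕ → Finset (List (Fin 5))
  | q, 0 => {[]}
  | q, n+1 => (edges q).biUnion fun e => ((lvl (tgt e) n).image fun w => e :: w)

lemma fmap_cons (e : Fin 5) (w : List (Fin 5)) (y : ℝ) : fmap (e :: w) y = fe e (fmap w y) := rfl

lemma fmap_append (u v : List (Fin 5)) (y : ℝ) : fmap (u ++ v) y = fmap u (fmap v y) := by
  induction u with
  | nil => rfl
  | cons e u ih => simp [fmap_cons, ih]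

lemma Mw_append (u v : List (Fin 5)) : Mw (u ++ v) = Mw u + Mw v := by
  induction u with
  | nil => simp [Mw]
  | cons e u ih => simp [Mw, ih]; ring

lemma fin_append (q : Bool) (u v : List (Fin 5)) : fin q (u ++ v) = fin (fin q u) v := by
  induction u generalizing q with
  | nil => rfl
  | cons e u ih => simp [fin, ih]

lemma fe_mono (e : Fin 5) : StrictMono (fe e) := by
  intro y z h
  have h3 : (0:ℝ) < 3 ^ (mm e) := by positivity
  simp only [fe]
  gcongr <;> linarith

lemma fmap_strictMono (w : List (Fin 5)) : StrictMono (fmap w) := by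
  induction w with
  | nil => exact strictMono_id
  | cons e w ih => exact (fe_mono e).comp ih

lemma fmap_sub (w : List (Fin 5)) (y z : ℝ) :
    fmap w y - fmap w z = (y - z) / 3 ^ (Mw w) := by
  induction w with
  | nil => simp [fmap, Mw]
  | cons e w ih =>
    simp only [fmap_cons, fe, Mw, pow_add]
    rw [div_sub_div_same, add_sub_add_right_eq_sub, ih]
    ring

lemma fmap_eq_affine (w : List (Fin 5)) (y : ℝ) :
    fmap w y = (1 / 3 ^ (Mw w)) * y + fmap w 0 := by
  have := fmap_sub w y 0
  field_simp at this ⊢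
  linarith

lemma fmap_image_Icc (w : List (Fin 5)) (u v : ℝ) (huv : u ≤ v) :
    fmap w '' Icc u v = Icc (fmap w u) (fmap w v) := by
  have h3 : (0:ℝ) < 1 / 3 ^ (Mw w) := by positivity
  have : fmap w = fun y => (1 / 3 ^ (Mw w)) * y + fmap w 0 := funext fun y => fmap_eq_affine w y
  rw [this]
  exact Set.image_affine_Icc' h3 _ _ _

lemma length_of_mem_lvl {q : Bool} {n : ℕ} {w : List (Fin 5)} (h : w ∈ lvl q n) :
    w.length = n := by
  induction n generalizing q w with
  | zero => simp [lvl] at h; simp [h]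
  | succ n ih =>
    simp only [lvl, Finset.mem_biUnion, Finset.mem_image] at h
    obtain ⟨e, -, w', hw', rfl⟩ := h
    simp [ih hw']

lemma mem_lvl_succ {q : Bool} {n : ℕ} {w : List (Fin 5)} :
    w ∈ lvl q (n+1) ↔ ∃ e ∈ edges q, ∃ w' ∈ lvl (tgt e) n, w = e :: w' := by
  simp [lvl, Finset.mem_biUnion, Finset.mem_image, eq_comm]

lemma sum_lvl_succ (q : Bool) (n : ℕ) (F : List (Fin 5) → ℝ) :
    ∑ w ∈ lvl q (n+1), F w = ∑ e ∈ edges q, ∑ w ∈ lvl (tgt e) n, F (e :: w) := by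
  rw [lvl, Finset.sum_biUnion]
  · exact Finset.sum_congr rfl fun e _ => Finset.sum_image (by intro a _ b _ h; simpa using h)
  · intro e _ e' _ hee'
    simp only [Finset.disjoint_left, Finset.mem_image]
    rintro w ⟨a, -, rfl⟩ ⟨b, -, hb⟩
    exact hee' (by simpa using (List.cons_eq_cons.mp hb).1.symm)

lemma append_mem_lvl {q : Bool} {k n : ℕ} {u w : List (Fin 5)} (hu : u ∈ lvl q k) :
    u ++ w ∈ lvl q (k + n) ↔ w ∈ lvl (fin q u) n := by
  induction k generalizing q u with
  | zero =>
    simp [lvl] at hu; subst hu; simp [fin, Nat.zero_add]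
  | succ k ih =>
    obtain ⟨e, he, u', hu', rfl⟩ := mem_lvl_succ.mp hu
    have : (e :: u') ++ w = e :: (u' ++ w) := rfl
    rw [this]
    constructor
    · intro h
      obtain ⟨e2, he2, w2, hw2, heq⟩ := mem_lvl_succ.mp (by
        have : k + 1 + n = (k + n) + 1 := by ring
        rwa [this] at h)
      obtain ⟨rfl, rfl⟩ := List.cons_eq_cons.mp heq
      rw [show fin q (e :: u') = fin (tgt e) u' from rfl]
      exact (ih hu').mp hw2
    · intro h
      have : k + 1 + n = (k + n) + 1 := by ring
      rw [this]
      exact mem_lvl_succ.mpr ⟨e, he, u' ++ w, (ih hu').mpr h, rfl⟩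

lemma prefix_mem_lvl {q : Bool} {n : ℕ} {u w : List (Fin 5)} (hw : w ∈ lvl q n)
    (hu : u <+: w) : u ∈ lvl q u.length := by
  induction u generalizing q w n with
  | nil => simp [lvl]
  | cons e u ih =>
    obtain ⟨t, rfl⟩ := hu
    have hlen := length_of_mem_lvl hw
    cases n with
    | zero => simp at hlen
    | succ n =>
      obtain ⟨e2, he2, w2, hw2, heq⟩ := mem_lvl_succ.mp hw
      have : e2 = e ∧ w2 = u ++ t := by
        constructor
        · exact (List.cons_eq_cons.mp heq.symm).1
        · exact (List.cons_eq_cons.mp heq.symm).2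
      obtain ⟨rfl, rfl⟩ := this
      have := ih hw2 ⟨t, rfl⟩
      exact mem_lvl_succ.mpr ⟨e2, he2, u, this, rfl⟩

section Weights

variable {t₀ : ℝ} (hpos : 0 < t₀) (hroot : t₀ ^ 3 - t₀ ^ 2 - 2 * t₀ + 1 = 0)
  (hlo : 2/5 < t₀) (hhi : t₀ < 1/2)

noncomputable def vv (t₀ : ℝ) : Bool → ℝ := fun q => if q then 1 - t₀ - t₀^2 else t₀^2

include hpos hhi in
lemma va_pos : 0 < vv t₀ false := by simp [vv]; positivity

include hpos hhi in
lemma vb_pos : 0 < vv t₀ true := by simp only [vv, if_true]; nlinarith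

include hroot in
lemma edge_sum (q : Bool) :
    ∑ e ∈ edges q, t₀ ^ (mm e) * vv t₀ (tgt e) = vv t₀ q := by
  cases q <;>
    simp [edges, vv, mm, tgt, Fin.sum_univ_five, Finset.sum_insert, Fin.isValue] <;>
    nlinarith [hroot, sq_nonneg t₀, mul_self_nonneg (t₀^2 - 1)]

include hroot in
lemma weight_sum (q : Bool) (n : ℕ) :
    ∑ w ∈ lvl q n, t₀ ^ (Mw w) * vv t₀ (fin q w) = vv t₀ q := by
  induction n generalizing q with
  | zero => simp [lvl, Mw, fin]
  | succ n ih =>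
    rw [sum_lvl_succ]
    rw [← edge_sum hroot q]
    refine Finset.sum_congr rfl fun e _ => ?_
    have : ∀ w, t₀ ^ Mw (e :: w) * vv t₀ (fin q (e :: w))
        = t₀ ^ (mm e) * (t₀ ^ (Mw w) * vv t₀ (fin (tgt e) w)) := by
      intro w; show t₀ ^ (mm e + Mw w) * _ = _
      rw [pow_add]; ring_nf
      rfl
    simp only [this, ← Finset.mul_sum, ih]

include hroot in
lemma prefix_weight_sum {q : Bool} {k : ℕ} {u : List (Fin 5)} (hu : u ∈ lvl q k) (n : ℕ) :
    ∑ w ∈ (lvl q (k + n)).filter (fun w => u <+: w), t₀ ^ (Mw w) * vv t₀ (fin q w)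
      = t₀ ^ (Mw u) * vv t₀ (fin q u) := by
  have himg : (lvl q (k + n)).filter (fun w => u <+: w)
      = (lvl (fin q u) n).image (fun w => u ++ w) := by
    ext w
    simp only [Finset.mem_filter, Finset.mem_image]
    constructor
    · rintro ⟨hw, t, rfl⟩
      exact ⟨t, (append_mem_lvl hu).mp hw, rfl⟩
    · rintro ⟨t, ht, rfl⟩
      exact ⟨(append_mem_lvl hu).mpr ht, t, rfl⟩
  rw [himg, Finset.sum_image (by intro a _ b _ h; simpa using h)]
  have : ∀ w, t₀ ^ Mw (u ++ w) * vv t₀ (fin q (u ++ w))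
      = t₀ ^ (Mw u) * (t₀ ^ (Mw w) * vv t₀ (fin (fin q u) w)) := by
    intro w; rw [Mw_append, fin_append, pow_add]; ring
  simp only [this, ← Finset.mul_sum, weight_sum hroot]

end Weights

section T0

variable {t₀ : ℝ} (ht₀ : IsLeast {t : ℝ | 0 < t ∧ t ^ 3 - t ^ 2 - 2 * t + 1 = 0} t₀)

include ht₀ in
lemma t0_pos : 0 < t₀ := ht₀.1.1

include ht₀ in
lemma t0_root : t₀ ^ 3 - t₀ ^ 2 - 2 * t₀ + 1 = 0 := ht₀.1.2

include ht₀ in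
lemma t0_lt_half : t₀ < 1/2 := by
  have hcont : ContinuousOn (fun t : ℝ => t ^ 3 - t ^ 2 - 2 * t + 1) (Icc 0 (1/2)) := by
    fun_prop
  have h0 : (0:ℝ) ∈ Icc ((1/2:ℝ)^3 - (1/2)^2 - 2*(1/2) + 1) ((0:ℝ)^3 - 0^2 - 2*0 + 1) := by
    norm_num
  obtain ⟨c, hc, hc0⟩ := intermediate_value_Icc' (by norm_num : (0:ℝ) ≤ 1/2) hcont h0
  have hcpos : 0 < c := by
    rcases hc.1.lt_or_eq with h | h
    · exact h
    · exfalso; rw [← h] at hc0; norm_num at hc0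
  have hchalf : c < 1/2 := by
    rcases hc.2.lt_or_eq with h | h
    · exact h
    · exfalso; rw [h] at hc0; norm_num at hc0
  exact lt_of_le_of_lt (ht₀.2 ⟨hcpos, hc0⟩) hchalf

include ht₀ in
lemma t0_gt : 2/5 < t₀ := by
  by_contra h
  push_neg at h
  have h1 := t0_pos ht₀
  have h2 := t0_root ht₀
  nlinarith [sq_nonneg t₀, sq_nonneg (t₀ - 2/5)]

end T0

section Geometry

lemma fe_mem_hull {q : Bool} {e : Fin 5} (he : e ∈ edges q) {y : ℝ}
    (hy : y ∈ Icc 0 (hl (tgt e))) : fe e y ∈ Icc 0 (hl q) := by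
  cases q <;> fin_cases he <;>
    simp_all [fe, cc, mm, hl, tgt, edges] <;> constructor <;> linarith

lemma fe_gap {e e' : Fin 5} (h : (e:ℕ) < (e':ℕ)) {y y' : ℝ}
    (hy : y ∈ Icc 0 (hl (tgt e))) (hy' : y' ∈ Icc 0 (hl (tgt e'))) :
    fe e y + 2/9 ≤ fe e' y' := by
  fin_cases e <;> fin_cases e' <;> simp_all [fe, cc, mm, hl, tgt] <;> linarith

lemma fe_gap_abs {e e' : Fin 5} (h : e ≠ e') {y y' : ℝ}
    (hy : y ∈ Icc 0 (hl (tgt e))) (hy' : y' ∈ Icc 0 (hl (tgt e'))) :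
    2/9 ≤ |fe e y - fe e' y'| := by
  rcases lt_or_gt_of_ne (fun hv => h (Fin.val_injective hv) : (e:ℕ) ≠ (e':ℕ)) with hlt | hlt
  · have := fe_gap hlt hy hy'
    rw [abs_sub_comm, abs_of_nonneg (by linarith)]
    linarith
  · have := fe_gap hlt hy' hy
    rw [abs_of_nonneg (by linarith)]
    linarith

lemma fmap_mem_hull {q : Bool} {n : ℕ} {w : List (Fin 5)} (hw : w ∈ lvl q n) {y : ℝ}
    (hy : y ∈ Icc 0 (hl (fin q w))) : fmap w y ∈ Icc 0 (hl q) := by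
  induction n generalizing q w with
  | zero => simp [lvl] at hw; subst hw; exact hy
  | succ n ih =>
    obtain ⟨e, he, w', hw', rfl⟩ := mem_lvl_succ.mp hw
    exact fe_mem_hull he (ih hw' hy)

lemma cylinder_sep {q : Bool} {n n' : ℕ} {u s s' : List (Fin 5)} {e e' : Fin 5}
    (hw : u ++ e :: s ∈ lvl q n) (hw' : u ++ e' :: s' ∈ lvl q n') (hee' : e ≠ e')
    {y y' : ℝ} (hy : y ∈ Icc 0 (hl (fin q (u ++ e :: s))))
    (hy' : y' ∈ Icc 0 (hl (fin q (u ++ e' :: s')))) :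
    2/9 * (1 / 3 ^ (Mw u)) ≤ |fmap (u ++ e :: s) y - fmap (u ++ e' :: s')  y'| := by
  have hu : u ∈ lvl q u.length := prefix_mem_lvl hw ⟨e :: s, rfl⟩
  have hlen : (u ++ e :: s).length = n := length_of_mem_lvl hw
  have hlen' : (u ++ e' :: s').length = n' := length_of_mem_lvl hw'
  have hes : e :: s ∈ lvl (fin q u) (e :: s).length := by
    have h2 : u ++ e :: s ∈ lvl q (u.length + (e :: s).length) := by
      rw [show u.length + (e :: s).length = n by rw [← hlen]; simp]
      exact hw
    exact (append_mem_lvl hu).mp h2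
  have hes' : e' :: s' ∈ lvl (fin q u) (e' :: s').length := by
    have h2 : u ++ e' :: s' ∈ lvl q (u.length + (e' :: s').length) := by
      rw [show u.length + (e' :: s').length = n' by rw [← hlen']; simp]
      exact hw'
    exact (append_mem_lvl hu).mp h2
  obtain ⟨e2, he2, s2, hs2, heq⟩ := mem_lvl_succ.mp (by simpa using hes)
  rw [List.cons_eq_cons] at heq
  obtain ⟨h1, h2⟩ := heq
  subst h1; subst h2
  obtain ⟨e3, he3, s3, hs3, heq'⟩ := mem_lvl_succ.mp (by simpa using hes')
  rw [List.cons_eq_cons] at heq'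
  obtain ⟨h1', h2'⟩ := heq'
  subst h1'; subst h2' 
  have hyy : fmap s y ∈ Icc 0 (hl (tgt e)) := by
    apply fmap_mem_hull hs2
    rw [fin_append] at hy
    exact hy
  have hyy' : fmap s' y' ∈ Icc 0 (hl (tgt e')) := by
    apply fmap_mem_hull hs3
    rw [fin_append] at hy'
    exact hy'
  have hgap := fe_gap_abs hee' hyy hyy'
  rw [fmap_append, fmap_append]
  have hsub := fmap_sub u (fmap (e :: s) y) (fmap (e' :: s') y')
  have h3 : (0:ℝ) < 3 ^ (Mw u) := by positivity
  rw [show fmap (e :: s) y = fe e (fmap s y) from rfl,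
    show fmap (e' :: s') y' = fe e' (fmap s' y') from rfl] at hsub
  calc 2/9 * (1 / 3 ^ (Mw u)) ≤ |fe e (fmap s y) - fe e' (fmap s' y')| / 3 ^ (Mw u) := by
        have h3' : (0:ℝ) < 3 ^ (Mw u) := by positivity
        rw [le_div_iff₀ h3']
        have h3ne : ((3:ℝ) ^ (Mw u)) ≠ 0 := by positivity
        have heq2 : 2/9 * (1 / 3 ^ (Mw u)) * 3 ^ (Mw u) = (2:ℝ)/9 := by
          field_simp
        rw [heq2]; exact hgap
      _ = |fmap u (fe e (fmap s y)) - fmap u (fe e' (fmap s' y'))| := by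
        rw [hsub, abs_div, abs_of_pos h3]

lemma exists_lcp {w w' : List (Fin 5)} (h1 : ¬ w <+: w') (h2 : ¬ w' <+: w) :
    ∃ u e e' s s', e ≠ e' ∧ w = u ++ e :: s ∧ w' = u ++ e' :: s' := by
  induction w generalizing w' with
  | nil => exact absurd (List.nil_prefix) h1
  | cons a w ih =>
    cases w' with
    | nil => exact absurd (List.nil_prefix) h2
    | cons a' w'' =>
      by_cases haa : a = a'
      · subst haa
        have h1' : ¬ w <+: w'' := fun h => h1 (by simpa using h)
        have h2' : ¬ w'' <+: w := fun h => h2 (by simpa using h)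
        obtain ⟨u, e, e', s, s', hee, rfl, rfl⟩ := ih h1' h2'
        exact ⟨a :: u, e, e', s, s', hee, rfl, rfl⟩
      · exact ⟨[], a, a', w, w'', haa, rfl, rfl⟩

end Geometry

section AbstractX

variable (X : Bool → Set ℝ)
  (hX1 : ∀ q, ∀ e ∈ edges q, fe e '' X (tgt e) ⊆ X q)
  (hX2 : ∀ q, X q ⊆ ⋃ e ∈ edges q, fe e '' X (tgt e))

include hX2 in
lemma cover_lvl (n : ℕ) (q : Bool) :
    X q ⊆ ⋃ w ∈ lvl q n, fmap w '' X (fin q w) := by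
  induction n generalizing q with
  | zero => intro x hx; simp [lvl, fin, fmap]; exact hx
  | succ n ih =>
    intro x hx
    obtain ⟨e, he, y, hy, rfl⟩ := by simpa using hX2 q hx
    obtain ⟨w, hw, z, hz, rfl⟩ := by simpa using ih (tgt e) hy
    simp only [mem_iUnion, mem_image]
    exact ⟨e :: w, mem_lvl_succ.mpr ⟨e, he, w, hw, rfl⟩, z, hz, rfl⟩

include hX1 in
lemma inv_lvl {n : ℕ} {q : Bool} {w : List (Fin 5)} (hw : w ∈ lvl q n) :
    fmap w '' X (fin q w) ⊆ X q := by
  induction n generalizing q w with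
  | zero => simp [lvl] at hw; subst hw; simp [fmap, fin]
  | succ n ih =>
    obtain ⟨e, he, w', hw', rfl⟩ := mem_lvl_succ.mp hw
    intro p hp
    obtain ⟨z, hz, rfl⟩ := hp
    exact hX1 q e he ⟨fmap w' z, ih hw' ⟨z, hz, rfl⟩, rfl⟩

end AbstractX

section Sumset

open Pointwise

variable {K : Set ℝ} (hKne : K.Nonempty) (hKc : IsCompact K)
  (hK : K = (fun x => x / 3) '' K ∪ (fun x => (x + 8) / 9) '' K)

/-- The state sets: `X false = K + K`, `X true = 3K + K`. -/
noncomputable def XS (K : Set ℝ) : Bool → Set ℝ :=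
  fun q => if q then ((fun x : ℝ => 3 * x) '' K + K) else (K + K)

include hK in
lemma mem_cases {x : ℝ} (hx : x ∈ K) :
    (∃ a ∈ K, a / 3 = x) ∨ (∃ a ∈ K, (a + 8) / 9 = x) := by
  rw [hK] at hx
  rcases hx with h | h
  · obtain ⟨a, ha, haa⟩ := h; exact Or.inl ⟨a, ha, haa⟩
  · obtain ⟨a, ha, haa⟩ := h; exact Or.inr ⟨a, ha, haa⟩

include hK in
lemma div3_mem {x : ℝ} (hx : x ∈ K) : x / 3 ∈ K := by
  rw [hK]; exact Or.inl ⟨x, hx, rfl⟩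

include hK in
lemma add8div9_mem {x : ℝ} (hx : x ∈ K) : (x + 8) / 9 ∈ K := by
  rw [hK]; exact Or.inr ⟨x, hx, rfl⟩

include hKne hKc hK in
lemma K_subset_Icc : K ⊆ Icc 0 1 := by
  have hbdd := hKc.bddAbove
  have hbdd' := hKc.bddBelow
  have hMmem : sSup K ∈ K := hKc.sSup_mem hKne
  have hmmem : sInf K ∈ K := hKc.sInf_mem hKne
  have hM1 : sSup K ≤ 1 := by
    rcases mem_cases hK hMmem with ⟨a, ha, haM⟩ | ⟨a, ha, haM⟩
    · have : a ≤ sSup K := le_csSup hbdd ha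
      linarith
    · have : a ≤ sSup K := le_csSup hbdd ha
      linarith
  have hm0 : 0 ≤ sInf K := by
    rcases mem_cases hK hmmem with ⟨a, ha, ham⟩ | ⟨a, ha, ham⟩
    · have : sInf K ≤ a := csInf_le hbdd' ha
      linarith
    · have : sInf K ≤ a := csInf_le hbdd' ha
      linarith
  intro x hx
  exact ⟨hm0.trans (csInf_le hbdd' hx), (le_csSup hbdd hx).trans hM1⟩

include hK in
lemma XS_cover : ∀ q, XS K q ⊆ ⋃ e ∈ edges q, fe e '' XS K (tgt e) := by
  have hS : ∀ z ∈ XS K false, ∃ e ∈ edges false, z ∈ fe e '' XS K (tgt e) := by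
    rintro z hz
    obtain ⟨x, hx, y, hy, rfl⟩ := Set.mem_add.mp hz
    rcases mem_cases hK hx with ⟨a, ha, rfl⟩ | ⟨a, ha, rfl⟩ <;>
      rcases mem_cases hK hy with ⟨b, hb, rfl⟩ | ⟨b, hb, rfl⟩
    · exact ⟨0, by decide, a + b, Set.mem_add.mpr ⟨a, ha, b, hb, rfl⟩, by
        simp [fe, cc, mm]; ring⟩
    · exact ⟨1, by decide, 3 * a + b, Set.mem_add.mpr ⟨3*a, ⟨a, ha, rfl⟩, b, hb, rfl⟩, by
        simp [fe, cc, mm, tgt, XS]; ring⟩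
    · exact ⟨1, by decide, 3 * b + a, Set.mem_add.mpr ⟨3*b, ⟨b, hb, rfl⟩, a, ha, rfl⟩, by
        simp [fe, cc, mm, tgt, XS]; ring⟩
    · exact ⟨2, by decide, a + b, Set.mem_add.mpr ⟨a, ha, b, hb, rfl⟩, by
        simp [fe, cc, mm, tgt, XS]; ring⟩
  intro q
  cases q
  · intro z hz
    obtain ⟨e, he, hmem⟩ := hS z hz
    exact Set.mem_biUnion he hmem
  · rintro z hz
    obtain ⟨x3, ⟨x, hx, rfl⟩, y, hy, rfl⟩ := Set.mem_add.mp hz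
    rcases mem_cases hK hx with ⟨a, ha, rfl⟩ | ⟨a, ha, rfl⟩
    · have hzS : 3 * (a / 3) + y ∈ XS K false := Set.mem_add.mpr ⟨a, ha, y, hy, by ring⟩
      obtain ⟨e, he, hmem⟩ := hS _ hzS
      have he' : e ∈ edges true := by
        fin_cases he <;> decide
      exact Set.mem_biUnion he' hmem
    · rcases mem_cases hK hy with ⟨b, hb, rfl⟩ | ⟨b, hb, rfl⟩
      · refine Set.mem_biUnion (show (3:Fin 5) ∈ edges true by decide)
          ⟨a + b, Set.mem_add.mpr ⟨a, ha, b, hb, rfl⟩, ?_⟩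
        simp [fe, cc, mm, tgt, XS]; ring
      · refine Set.mem_biUnion (show (4:Fin 5) ∈ edges true by decide)
          ⟨3 * a + b, Set.mem_add.mpr ⟨3*a, ⟨a, ha, rfl⟩, b, hb, rfl⟩, ?_⟩
        simp [fe, cc, mm, tgt, XS]; ring

include hK in
lemma S_subset_T : XS K false ⊆ XS K true := by
  rintro z hz
  obtain ⟨x, hx, y, hy, rfl⟩ := Set.mem_add.mp hz
  exact Set.mem_add.mpr ⟨x, ⟨x/3, div3_mem hK hx, by ring⟩, y, hy, rfl⟩

include hK in
lemma XS_inv : ∀ q, ∀ e ∈ edges q, fe e '' XS K (tgt e) ⊆ XS K q := by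
  have h0 : fe 0 '' XS K false ⊆ XS K false := by
    rintro - ⟨z, hz, rfl⟩
    obtain ⟨x, hx, y, hy, rfl⟩ := Set.mem_add.mp hz
    exact Set.mem_add.mpr ⟨x/3, div3_mem hK hx, y/3, div3_mem hK hy, by
      simp [fe, cc, mm]; ring⟩
  have h1 : fe 1 '' XS K true ⊆ XS K false := by
    rintro - ⟨z, hz, rfl⟩
    obtain ⟨x3, ⟨x, hx, rfl⟩, y, hy, rfl⟩ := Set.mem_add.mp hz
    exact Set.mem_add.mpr ⟨x/3, div3_mem hK hx, (y+8)/9, add8div9_mem hK hy, by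
      simp [fe, cc, mm]; ring⟩
  have h2 : fe 2 '' XS K false ⊆ XS K false := by
    rintro - ⟨z, hz, rfl⟩
    obtain ⟨x, hx, y, hy, rfl⟩ := Set.mem_add.mp hz
    exact Set.mem_add.mpr ⟨(x+8)/9, add8div9_mem hK hx, (y+8)/9, add8div9_mem hK hy, by
      simp [fe, cc, mm]; ring⟩
  have h3 : fe 3 '' XS K false ⊆ XS K true := by
    rintro - ⟨z, hz, rfl⟩
    obtain ⟨x, hx, y, hy, rfl⟩ := Set.mem_add.mp hz
    exact Set.mem_add.mpr ⟨3 * ((y+8)/9), ⟨(y+8)/9, add8div9_mem hK hy, rfl⟩,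
      x/3, div3_mem hK hx, by simp [fe, cc, mm]; ring⟩
  have h4 : fe 4 '' XS K true ⊆ XS K true := by
    rintro - ⟨z, hz, rfl⟩
    obtain ⟨x3, ⟨x, hx, rfl⟩, y, hy, rfl⟩ := Set.mem_add.mp hz
    exact Set.mem_add.mpr ⟨3 * ((x+8)/9), ⟨(x+8)/9, add8div9_mem hK hx, rfl⟩,
      (y+8)/9, add8div9_mem hK hy, by simp [fe, cc, mm]; ring⟩
  intro q e he
  cases q <;> fin_cases he
  · exact h0
  · exact h1
  · exact h2
  · exact h0.trans (S_subset_T hK)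
  · exact h1.trans (S_subset_T hK)
  · exact h2.trans (S_subset_T hK)
  · exact h3
  · exact h4

include hKne hKc hK in
lemma XS_hull : ∀ q, XS K q ⊆ Icc 0 (hl q) := by
  have hsub := K_subset_Icc hKne hKc hK
  intro q
  cases q
  · rintro z hz
    obtain ⟨x, hx, y, hy, rfl⟩ := Set.mem_add.mp hz
    obtain ⟨h1, h2⟩ := hsub hx
    obtain ⟨h3, h4⟩ := hsub hy
    exact ⟨by linarith, by simp only [hl, if_false]; norm_num; linarith⟩
  · rintro z hz
    obtain ⟨x3, ⟨x, hx, rfl⟩, y, hy, rfl⟩ := Set.mem_add.mp hz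
    obtain ⟨h1, h2⟩ := hsub hx
    obtain ⟨h3, h4⟩ := hsub hy
    refine ⟨?_, ?_⟩ <;> simp only [hl, if_true] <;> show _ ≤ _ <;> norm_num <;> linarith

include hKne in
lemma XS_nonempty : ∀ q, (XS K q).Nonempty := by
  obtain ⟨x, hx⟩ := hKne
  intro q
  cases q
  · exact ⟨x + x, Set.mem_add.mpr ⟨x, hx, x, hx, rfl⟩⟩
  · exact ⟨3*x + x, Set.mem_add.mpr ⟨3*x, ⟨x, hx, rfl⟩, x, hx, rfl⟩⟩

end Sumset

section Dim

open MeasureTheory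

noncomputable def sd (t₀ : ℝ) : ℝ := Real.log t₀ / (- Real.log 3)

variable {t₀ : ℝ} (hpos : 0 < t₀) (hroot : t₀ ^ 3 - t₀ ^ 2 - 2 * t₀ + 1 = 0)
  (hlo : 2/5 < t₀) (hhi : t₀ < 1/2)

include hpos hhi in
lemma sd_pos : 0 < sd t₀ := by
  have h1 : Real.log t₀ < 0 := Real.log_neg hpos (by linarith)
  have h2 : (0:ℝ) < Real.log 3 := Real.log_pos (by norm_num)
  unfold sd
  exact div_pos_iff.mpr (Or.inr ⟨h1, by linarith⟩)

include hpos hlo in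
lemma sd_le_one : sd t₀ ≤ 1 := by
  have h2 : (0:ℝ) < Real.log 3 := Real.log_pos (by norm_num)
  have h3 : Real.log (1/3) ≤ Real.log t₀ :=
    Real.log_le_log (by norm_num) (by linarith)
  rw [show (1:ℝ)/3 = 3⁻¹ by norm_num, Real.log_inv] at h3
  unfold sd
  rw [div_neg, neg_le]
  have hd : (- Real.log 3) / Real.log 3 ≤ Real.log t₀ / Real.log 3 :=
    div_le_div_of_nonneg_right ?_ h2.le |>.trans_eq rfl
  · have : (- Real.log 3) / Real.log 3 = -1 := by field_simp
    linarith
  · linarith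

include hpos in
lemma sd_key : Real.log t₀ = - (sd t₀ * Real.log 3) := by
  have h2 : Real.log 3 ≠ 0 := ne_of_gt (Real.log_pos (by norm_num))
  unfold sd
  field_simp

include hpos in
lemma rpow_third (M : ℕ) : (((1:ℝ)/3) ^ M) ^ (sd t₀) = t₀ ^ M := by
  have h13 : (0:ℝ) < (1/3:ℝ)^M := by positivity
  rw [← Real.rpow_natCast ((1:ℝ)/3) M, ← Real.rpow_natCast t₀ M,
    ← Real.rpow_mul (by norm_num : (0:ℝ) ≤ 1/3)]
  rw [Real.rpow_def_of_pos (by norm_num : (0:ℝ) < 1/3), Real.rpow_def_of_pos hpos]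
  congr 1
  rw [show (1:ℝ)/3 = 3⁻¹ by norm_num, Real.log_inv, sd_key hpos]
  ring

end Dim

section Upper

open MeasureTheory Filter

lemma mm_ge_one (e : Fin 5) : 1 ≤ mm e := by fin_cases e <;> simp [mm]

lemma Mw_ge_length (w : List (Fin 5)) : w.length ≤ Mw w := by
  induction w with
  | nil => simp [Mw]
  | cons e w ih =>
    simp only [List.length_cons, Mw]
    have := mm_ge_one e
    omega

lemma hl_pos (q : Bool) : 0 < hl q := by cases q <;> norm_num [hl]
lemma hl_ge_two (q : Bool) : 2 ≤ hl q := by cases q <;> norm_num [hl]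
lemma hl_le_four (q : Bool) : hl q ≤ 4 := by cases q <;> norm_num [hl]

variable {t₀ : ℝ} (hpos : 0 < t₀) (hroot : t₀ ^ 3 - t₀ ^ 2 - 2 * t₀ + 1 = 0)
  (hlo : 2/5 < t₀) (hhi : t₀ < 1/2)
  (X : Bool → Set ℝ)
  (hX1 : ∀ q, ∀ e ∈ edges q, fe e '' X (tgt e) ⊆ X q)
  (hX2 : ∀ q, X q ⊆ ⋃ e ∈ edges q, fe e '' X (tgt e))
  (hXh : ∀ q, X q ⊆ Icc 0 (hl q))

noncomputable def Dset (w : List (Fin 5)) : Set ℝ := fmap w '' Icc 0 (hl (fin false w))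

lemma Dset_eq (w : List (Fin 5)) :
    Dset w = Icc (fmap w 0) (fmap w (hl (fin false w))) :=
  fmap_image_Icc w 0 _ (hl_pos _).le

lemma Dset_width (w : List (Fin 5)) :
    fmap w (hl (fin false w)) - fmap w 0 = hl (fin false w) * (1/3) ^ (Mw w) := by
  rw [fmap_sub, sub_zero, one_div_pow, mul_one_div]

lemma Dset_ediam (w : List (Fin 5)) :
    EMetric.diam (Dset w) = ENNReal.ofReal (hl (fin false w) * (1/3) ^ (Mw w)) := by
  rw [Dset_eq]; show Metric.ediam _ = _; rw [Real.ediam_Icc, Dset_width]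

include hpos hlo hhi hroot hX2 hXh in
theorem dim_upper : dimH (X false) ≤ ENNReal.ofReal (sd t₀) := by
  set d : ℝ≥0 := (sd t₀).toNNReal with hd
  have hsdpos := sd_pos hpos hhi
  have hdc : ((d : ℝ≥0∞)) = ENNReal.ofReal (sd t₀) := rfl
  rw [← hdc]
  apply dimH_le_of_hausdorffMeasure_ne_top (d := d)
  have hball : ∀ n : ℕ, ∀ w ∈ lvl false n, EMetric.diam (Dset w) ≤
      ENNReal.ofReal (4 * (1/3)^n) := by
    intro n w hw
    rw [Dset_ediam]
    apply ENNReal.ofReal_le_ofReal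
    have h1 : ((1:ℝ)/3) ^ (Mw w) ≤ (1/3) ^ n := by
      apply pow_le_pow_of_le_one (by norm_num) (by norm_num)
      rw [← length_of_mem_lvl hw]
      exact Mw_ge_length w
    have := hl_le_four (fin false w)
    have h3 : (0:ℝ) ≤ (1/3:ℝ) ^ (Mw w) := by positivity
    nlinarith
  have hcover : ∀ n : ℕ, X false ⊆ ⋃ w : ↥(lvl false n), Dset (w : List (Fin 5)) := by
    intro n
    intro x hx
    obtain ⟨w, hw, hmem⟩ := by simpa using cover_lvl X hX2 n false hx
    have : x ∈ Dset w := by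
      obtain ⟨y, hy, rfl⟩ := hmem
      exact ⟨y, hXh _ hy, rfl⟩
    exact Set.mem_iUnion.mpr ⟨⟨w, hw⟩, this⟩
  have hle := Measure.hausdorffMeasure_le_liminf_sum (d : ℝ) (X false)
    (fun n => ENNReal.ofReal (4 * (1/3)^n))
    (by
      rw [← ENNReal.ofReal_zero]
      apply ENNReal.tendsto_ofReal
      have : Tendsto (fun n : ℕ => ((1:ℝ)/3)^n) atTop (nhds 0) :=
        tendsto_pow_atTop_nhds_zero_of_lt_one (by norm_num) (by norm_num)
      simpa using this.const_mul 4)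
    (fun n (w : ↥(lvl false n)) => Dset (w : List (Fin 5)))
    (Eventually.of_forall fun n => fun w => hball n w w.2)
    (Eventually.of_forall hcover)
  set mab : ℝ := min (vv t₀ false) (vv t₀ true) with hmab
  have hmabpos : 0 < mab := lt_min (va_pos hpos hhi) (vb_pos hpos hhi)
  have hbound : ∀ n : ℕ, (∑ w : ↥(lvl false n),
      EMetric.diam (Dset (w : List (Fin 5))) ^ (d:ℝ)) ≤
      ENNReal.ofReal (4 * (vv t₀ false) / mab) := by
    intro n
    have hterm : ∀ w ∈ lvl false n, EMetric.diam (Dset w) ^ (d:ℝ) ≤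
        ENNReal.ofReal (4 * (t₀ ^ (Mw w) * vv t₀ (fin false w)) / mab) := by
      intro w hw
      rw [Dset_ediam]
      have hpos2 : (0:ℝ) ≤ hl (fin false w) * (1/3) ^ (Mw w) := by
        have := hl_pos (fin false w); positivity
      rw [ENNReal.ofReal_rpow_of_nonneg hpos2 (by positivity)]
      apply ENNReal.ofReal_le_ofReal
      have hdr : (d : ℝ) = sd t₀ := Real.coe_toNNReal _ hsdpos.le
      rw [hdr]
      have hfl : (hl (fin false w) * (1/3) ^ (Mw w)) ^ (sd t₀)
          = (hl (fin false w)) ^ (sd t₀) * t₀ ^ (Mw w) := by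
        rw [Real.mul_rpow (hl_pos _).le (by positivity), rpow_third hpos]
      rw [hfl]
      have h4 : (hl (fin false w)) ^ (sd t₀) ≤ 4 := by
        calc (hl (fin false w)) ^ (sd t₀) ≤ (4:ℝ) ^ (sd t₀) :=
              Real.rpow_le_rpow (hl_pos _).le (hl_le_four _) hsdpos.le
          _ ≤ (4:ℝ) ^ (1:ℝ) :=
              Real.rpow_le_rpow_of_exponent_le (by norm_num) (sd_le_one hpos hlo)
          _ = 4 := by norm_num
      have hvge : mab ≤ vv t₀ (fin false w) := by
        cases (fin false w) <;> [exact min_le_left _ _; exact min_le_right _ _]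
      have ht0p : (0:ℝ) < t₀ ^ (Mw w) := by positivity
      rw [le_div_iff₀ hmabpos]
      have h₁ := mul_le_mul_of_nonneg_right (mul_le_mul_of_nonneg_right h4 ht0p.le) hmabpos.le
      have h₂ := mul_le_mul_of_nonneg_left hvge (by positivity : (0:ℝ) ≤ 4 * t₀ ^ Mw w)
      nlinarith [h₁, h₂]
    calc (∑ w : ↥(lvl false n), EMetric.diam (Dset (w : List (Fin 5))) ^ (d:ℝ))
        ≤ ∑ w : ↥(lvl false n),
          ENNReal.ofReal (4 * (t₀ ^ (Mw (w:List (Fin 5))) * vv t₀ (fin false (w:List (Fin 5)))) / mab) :=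
          Finset.sum_le_sum fun w _ => hterm w w.2
      _ = ENNReal.ofReal (∑ w : ↥(lvl false n),
          4 * (t₀ ^ (Mw (w:List (Fin 5))) * vv t₀ (fin false (w:List (Fin 5)))) / mab) := by
          rw [ENNReal.ofReal_sum_of_nonneg]
          intro w _
          have h5 := va_pos hpos hhi
          have h6 := vb_pos hpos hhi
          have hvp : 0 < vv t₀ (fin false (w:List (Fin 5))) := by
            cases (fin false (w:List (Fin 5))) <;> assumption
          positivity
      _ = ENNReal.ofReal (4 * (vv t₀ false) / mab) := by
          congr 1
          rw [Finset.sum_coe_sort (lvl false n)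
            (fun w => 4 * (t₀ ^ (Mw w) * vv t₀ (fin false w)) / mab)]
          have : ∀ w, 4 * (t₀ ^ (Mw w) * vv t₀ (fin false w)) / mab
              = (4/mab) * (t₀ ^ (Mw w) * vv t₀ (fin false w)) := fun w => by ring
          simp only [this]
          rw [← Finset.mul_sum, weight_sum hroot]
          ring
  have hliminf : Filter.liminf (fun n => ∑ w : ↥(lvl false n),
      EMetric.diam (Dset (w : List (Fin 5))) ^ (d:ℝ)) atTop
      ≤ ENNReal.ofReal (4 * (vv t₀ false) / mab) := by
    calc Filter.liminf (fun n => ∑ w : ↥(lvl false n),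
        EMetric.diam (Dset (w : List (Fin 5))) ^ (d:ℝ)) atTop
        ≤ Filter.liminf (fun _ : ℕ => ENNReal.ofReal (4 * (vv t₀ false) / mab)) atTop :=
          Filter.liminf_le_liminf (Eventually.of_forall hbound)
      _ = ENNReal.ofReal (4 * (vv t₀ false) / mab) := Filter.liminf_const _
  exact ne_top_of_le_ne_top ENNReal.ofReal_ne_top (hle.trans hliminf)

end Upper

section LowerPrep

open MeasureTheory

noncomputable def wdt (w : List (Fin 5)) : ℝ := hl (fin false w) * (1/3) ^ (Mw w)

lemma wdt_pos (w : List (Fin 5)) : 0 < wdt w := by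
  have := hl_pos (fin false w); unfold wdt; positivity

lemma wdt_le (w : List (Fin 5)) : wdt w ≤ 4 * (1/3) ^ (Mw w) := by
  unfold wdt
  have := hl_le_four (fin false w)
  have : (0:ℝ) ≤ (1/3:ℝ)^(Mw w) := by positivity
  nlinarith [hl_le_four (fin false w)]

lemma wdt_ge (w : List (Fin 5)) : 2 * (1/3) ^ (Mw w) ≤ wdt w := by
  unfold wdt
  have h : (0:ℝ) ≤ (1/3:ℝ)^(Mw w) := by positivity
  nlinarith [hl_ge_two (fin false w)]

lemma wdt_prefix_le {u w : List (Fin 5)} (h : u <+: w) : wdt w ≤ wdt u := by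
  obtain ⟨v, rfl⟩ := h
  unfold wdt
  rw [Mw_append, fin_append, pow_add]
  rcases v with _ | ⟨e, v⟩
  · simp [fin, Mw]
  · have hMv : 1 ≤ Mw (e :: v) := by
      have := mm_ge_one e
      have : 1 ≤ mm e + Mw v := by omega
      simpa [Mw] using this
    have h13 : ((1:ℝ)/3) ^ (Mw (e :: v)) ≤ (1/3) := by
      calc ((1:ℝ)/3) ^ (Mw (e :: v)) ≤ ((1:ℝ)/3) ^ (1:ℕ) :=
        pow_le_pow_of_le_one (by norm_num) (by norm_num) hMv
      _ = 1/3 := pow_one _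
    have h2 := hl_ge_two (fin false u)
    have h4 := hl_le_four (fin (fin false u) (e :: v))
    have hp : (0:ℝ) < ((1:ℝ)/3) ^ (Mw u) := by positivity
    have hq : (0:ℝ) < ((1:ℝ)/3) ^ (Mw (e :: v)) := by positivity
    have : hl (fin (fin false u) (e :: v)) * (1/3) ^ (Mw (e :: v)) ≤ 4 * (1/3) := by
      nlinarith
    nlinarith

lemma real_rpow_subadd {x y p : ℝ} (hx : 0 ≤ x) (hy : 0 ≤ y) (hp : 0 ≤ p) (hp1 : p ≤ 1) :
    (x + y) ^ p ≤ x ^ p + y ^ p := by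
  have h := NNReal.rpow_add_le_add_rpow x.toNNReal y.toNNReal hp hp1
  have hco : ((x.toNNReal + y.toNNReal : ℝ≥0) : ℝ) = x + y := by
    simp [Real.coe_toNNReal x hx, Real.coe_toNNReal y hy]
  calc (x + y) ^ p = (((x.toNNReal + y.toNNReal : ℝ≥0) : ℝ)) ^ p := by rw [hco]
    _ = (((x.toNNReal + y.toNNReal : ℝ≥0) ^ p : ℝ≥0) : ℝ) := by
        rw [NNReal.coe_rpow]
    _ ≤ ((x.toNNReal ^ p + y.toNNReal ^ p : ℝ≥0) : ℝ) := by
        exact_mod_cast h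
    _ = x ^ p + y ^ p := by
        push_cast [NNReal.coe_rpow, Real.coe_toNNReal x hx, Real.coe_toNNReal y hy]
        ring

lemma geom_tail_sum (F : Finset ℕ) : ∑ i ∈ F, ((1:ℝ)/2) ^ (i+1) ≤ 1 := by
  classical
  set N := F.sup id + 1 with hN
  have hsub : F ⊆ Finset.range N := by
    intro i hi
    simp only [Finset.mem_range, hN]
    have := Finset.le_sup (f := id) hi
    simp only [id] at this
    omega
  calc ∑ i ∈ F, ((1:ℝ)/2) ^ (i+1) ≤ ∑ i ∈ Finset.range N, ((1:ℝ)/2) ^ (i+1) :=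
        Finset.sum_le_sum_of_subset_of_nonneg hsub (fun i _ _ => by positivity)
    _ = (1/2) * ∑ i ∈ Finset.range N, ((1:ℝ)/2) ^ i := by
        rw [Finset.mul_sum]
        exact Finset.sum_congr rfl fun i _ => by ring
    _ ≤ 1 := by
        rw [geom_sum_eq (by norm_num : ((1:ℝ)/2) ≠ 1)]
        have h2 : (0:ℝ) < (1/2:ℝ)^N := by positivity
        have : (((1:ℝ)/2) ^ N - 1) / (1/2 - 1) = 2 * (1 - (1/2)^N) := by ring
        rw [this]
        nlinarith

lemma thickening_diam_ge {s : Set ℝ} {δ : ℝ} (hδ : 0 < δ) (hb : Bornology.IsBounded s)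
    (hne : (Metric.thickening δ s).Nonempty) : δ ≤ Metric.diam (Metric.thickening δ s) := by
  obtain ⟨p, hp⟩ := hne
  obtain ⟨x, hx, -⟩ := Metric.mem_thickening_iff.mp hp
  have hball := Metric.ball_subset_thickening hx δ
  have hbThick : Bornology.IsBounded (Metric.thickening δ s) := hb.thickening
  have h1 : x + δ/2 ∈ Metric.thickening δ s := by
    apply hball
    simp [Real.ball_eq_Ioo]
    constructor <;> linarith
  have h2 : x - δ/2 ∈ Metric.thickening δ s := by
    apply hball
    simp [Real.ball_eq_Ioo]
    constructor <;> linarith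
  have hd := Metric.dist_le_diam_of_mem hbThick h1 h2
  rw [Real.dist_eq] at hd
  have heq : |x + δ/2 - (x - δ/2)| = δ := by
    rw [show x + δ/2 - (x - δ/2) = δ by ring, abs_of_pos hδ]
  linarith [heq ▸ hd]

end LowerPrep

section Cut

open scoped Classical

noncomputable def cut (d' : ℝ) (U : Set ℝ) (n : ℕ) : Finset (List (Fin 5)) :=
  (Finset.range (n+1)).biUnion fun k => (lvl false k).filter
    (fun u => wdt u ≤ d' ∧ u ≠ [] ∧ d' < wdt u.dropLast ∧ (Dset u ∩ U).Nonempty)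

lemma mem_cut {d' : ℝ} {U : Set ℝ} {n : ℕ} {u : List (Fin 5)} :
    u ∈ cut d' U n ↔ u.length ≤ n ∧ u ∈ lvl false u.length ∧ wdt u ≤ d' ∧ u ≠ [] ∧
      d' < wdt u.dropLast ∧ (Dset u ∩ U).Nonempty := by
  simp only [cut, Finset.mem_biUnion, Finset.mem_range, Finset.mem_filter]
  constructor
  · rintro ⟨k, hk, hu, h⟩
    have := length_of_mem_lvl hu
    subst this
    exact ⟨by omega, hu, h⟩
  · rintro ⟨h1, h2, h⟩
    exact ⟨u.length, by omega, h2, h⟩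

lemma dropLast_of_prefix {g u : List (Fin 5)} {e : Fin 5} {t : List (Fin 5)}
    (h : g ++ e :: t = u) : g <+: u.dropLast := by
  subst h
  rw [List.dropLast_append_cons]
  exact ⟨(e :: t).dropLast, rfl⟩

lemma prefix_dropLast_of_ne {u u' : List (Fin 5)} (h : u <+: u') (hne : u ≠ u') :
    u <+: u'.dropLast := by
  obtain ⟨v, rfl⟩ := h
  rcases v with _ | ⟨e, t⟩
  · simp at hne
  · exact dropLast_of_prefix rfl

/-- distinct cut elements are incomparable -/
lemma cut_incomp {d' : ℝ} {U : Set ℝ} {n : ℕ} {u u' : List (Fin 5)}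
    (hu : u ∈ cut d' U n) (hu' : u' ∈ cut d' U n) (hne : u ≠ u') :
    ¬ u <+: u' ∧ ¬ u' <+: u := by
  obtain ⟨-, -, hw1, -, hp1, -⟩ := mem_cut.mp hu
  obtain ⟨-, -, hw1', -, hp1', -⟩ := mem_cut.mp hu'
  constructor
  · intro hpre
    have := wdt_prefix_le (prefix_dropLast_of_ne hpre hne)
    linarith
  · intro hpre
    have := wdt_prefix_le (prefix_dropLast_of_ne hpre (Ne.symm hne))
    linarith

/-- separation: distinct cut elements have representative points > d'/18 apart -/
lemma cut_sep {d' : ℝ} {U : Set ℝ} {n : ℕ} {u u' : List (Fin 5)}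
    (hu : u ∈ cut d' U n) (hu' : u' ∈ cut d' U n) (hne : u ≠ u')
    {p p' : ℝ} (hp : p ∈ Dset u) (hp' : p' ∈ Dset u') (hd' : 0 < d') :
    d' / 18 < |p - p'| := by
  obtain ⟨hincomp, hincomp'⟩ := cut_incomp hu hu' hne
  obtain ⟨g, e, e', t, t', hee, hgu, hgu'⟩ := exists_lcp hincomp hincomp'
  obtain ⟨hlen, hlvl, hw1, hne1, hpar, -⟩ := mem_cut.mp hu
  obtain ⟨hlen', hlvl', hw1', hne1', hpar', -⟩ := mem_cut.mp hu'
  obtain ⟨y, hy, rfl⟩ := hp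
  obtain ⟨y', hy', rfl⟩ := hp'
  subst hgu; subst hgu'
  have hsep := cylinder_sep hlvl hlvl' hee hy hy'
  -- (1/3)^(Mw g) > d'/4
  have hgpre : g <+: (g ++ e :: t).dropLast := dropLast_of_prefix rfl
  have h1 : wdt ((g ++ e :: t).dropLast) ≤ wdt g := wdt_prefix_le hgpre
  have h2 : d' < wdt g := lt_of_lt_of_le hpar h1
  have h3 : wdt g ≤ 4 * (1/3) ^ (Mw g) := wdt_le g
  have h4 : d' / 4 < (1/3) ^ (Mw g) := by linarith
  calc d' / 18 < 2/9 * (1/3) ^ (Mw g) := by linarith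
    _ ≤ |fmap (g ++ e :: t) y - fmap (g ++ e' :: t') y'| := by
        have heq9 : (2:ℝ)/9 * (1/3) ^ (Mw g) = 2/9 * (1 / 3 ^ (Mw g)) := by
          rw [one_div_pow]
        rw [heq9]
        exact hsep

/-- floor trick: the cut has at most 37 elements -/
lemma cut_card {d' : ℝ} {U : Set ℝ} {n : ℕ} (hd' : 0 < d')
    (hU : ∀ x ∈ U, ∀ y ∈ U, dist x y ≤ d') :
    (cut d' U n).card ≤ 37 := by
  rcases (cut d' U n).eq_empty_or_nonempty with he | ⟨u₀, hu₀⟩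
  · simp [he]
  have hq : ∀ u ∈ cut d' U n, (Dset u ∩ U).Nonempty := fun u hu => (mem_cut.mp hu).2.2.2.2.2
  set q : List (Fin 5) → ℝ := fun u => if h : (Dset u ∩ U).Nonempty then h.choose else 0 with hqdef
  have hqmem : ∀ u ∈ cut d' U n, q u ∈ Dset u ∩ U := by
    intro u hu
    have h := hq u hu
    simp only [hqdef, dif_pos h]
    exact h.choose_spec
  have hcard : ((Finset.Icc (-18:ℤ) 18)).card = 37 := by decide
  rw [← hcard]
  apply Finset.card_le_card_of_injOn (fun u => ⌊(q u - q u₀) * (18 / d')⌋)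
  · intro u hu
    have h1 : dist (q u) (q u₀) ≤ d' := hU _ (hqmem u hu).2 _ (hqmem u₀ hu₀).2
    rw [Real.dist_eq] at h1
    have habs : |(q u - q u₀) * (18 / d')| ≤ 18 := by
      rw [abs_mul, abs_of_pos (by positivity : (0:ℝ) < 18 / d')]
      rw [div_eq_mul_inv]
      have : |q u - q u₀| * (18 * d'⁻¹) ≤ d' * (18 * d'⁻¹) :=
        mul_le_mul_of_nonneg_right h1 (by positivity)
      calc |q u - q u₀| * (18 * d'⁻¹) ≤ d' * (18 * d'⁻¹) := this
        _ = 18 := by field_simp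
    rw [abs_le] at habs
    simp only [Finset.mem_coe, Finset.mem_Icc]
    constructor
    · calc (-18 : ℤ) = ⌊(-18 : ℝ)⌋ := by norm_num
        _ ≤ _ := Int.floor_le_floor habs.1
    · calc ⌊(q u - q u₀) * (18 / d')⌋ ≤ ⌊(18:ℝ)⌋ := Int.floor_le_floor habs.2
        _ = 18 := by norm_num
  · intro u hu u' hu' heq
    by_contra hne
    have hsep := cut_sep hu hu' hne (hqmem u hu).1 (hqmem u' hu').1 hd'
    set A := (q u - q u₀) * (18 / d') with hA
    set B := (q u' - q u₀) * (18 / d') with hB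
    have heqR : ((⌊A⌋:ℤ):ℝ) = ((⌊B⌋:ℤ):ℝ) := by exact_mod_cast congrArg (fun z : ℤ => (z:ℝ)) heq
    have hA1 := Int.lt_floor_add_one A
    have hB1 := Int.floor_le B
    have hA2 := Int.floor_le A
    have hB2 := Int.lt_floor_add_one B
    have h3 : |A - B| < 1 := abs_sub_lt_iff.mpr ⟨by linarith, by linarith⟩
    have h4 : A - B = (q u - q u') * (18 / d') := by rw [hA, hB]; ring
    rw [h4, abs_mul, abs_of_pos (by positivity : (0:ℝ) < 18 / d')] at h3
    have h5 : |q u - q u'| < d' / 18 := by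
      have h6 : |q u - q u'| * (18 / d') * (d' / 18) < 1 * (d' / 18) :=
        mul_lt_mul_of_pos_right h3 (by positivity)
      have h7 : |q u - q u'| * (18 / d') * (d' / 18) = |q u - q u'| := by
        field_simp
      linarith [h7 ▸ h6]
    linarith

end Cut

section CutCover

open scoped Classical

lemma wdt_nil : wdt [] = 2 := by simp [wdt, Mw, fin, hl]

lemma exists_cut_elem {n : ℕ} {w : List (Fin 5)} (hw : w ∈ lvl false n)
    {d' : ℝ} (hd2 : d' < 2) (hsmall : wdt w ≤ d') {U : Set ℝ} {p : ℝ}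
    (hpU : p ∈ U) (hpD : ∀ u, u <+: w → p ∈ Dset u) :
    ∃ u ∈ cut d' U n, u <+: w := by
  have hlen : w.length = n := length_of_mem_lvl hw
  have hexists : ∃ k, wdt (w.take k) ≤ d' := ⟨w.length, by
    rw [List.take_length]; exact hsmall⟩
  set k₀ := Nat.find hexists with hk₀
  have hfind := Nat.find_spec hexists
  have hk₀pos : 0 < k₀ := by
    rcases Nat.eq_zero_or_pos k₀ with h | h
    · exfalso
      have := hk₀ ▸ h
      have h0 : wdt (w.take 0) ≤ d' := by
        rw [← this]; exact hfind
      rw [List.take_zero, wdt_nil] at h0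
      linarith
    · exact h
  have hk₀len : k₀ ≤ w.length := by
    by_contra h
    push_neg at h
    have := Nat.find_min hexists (show w.length < k₀ from h)
    rw [List.take_length] at this
    exact this hsmall
  set u := w.take k₀ with hu
  have hulen : u.length = k₀ := by
    rw [hu, List.length_take]
    omega
  have hupre : u <+: w := List.take_prefix _ _
  have humem : u ∈ lvl false u.length := prefix_mem_lvl hw hupre
  have hune : u ≠ [] := by
    intro h
    rw [h] at hulen
    simp at hulen
    omega
  have hdrop : u.dropLast = w.take (k₀ - 1) := by
    rw [hu, List.dropLast_eq_take, List.take_take, List.length_take]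
    congr 1
    omega
  have hpar : d' < wdt u.dropLast := by
    rw [hdrop]
    by_contra h
    push_neg at h
    exact Nat.find_min hexists (show k₀ - 1 < k₀ by omega) h
  refine ⟨u, mem_cut.mpr ⟨by omega, humem, ?_, hune, hpar, ⟨p, hpD u hupre, hpU⟩⟩, hupre⟩
  rw [hu]; exact hfind

variable (X : Bool → Set ℝ)
  (hX1 : ∀ q, ∀ e ∈ edges q, fe e '' X (tgt e) ⊆ X q)
  (hXh : ∀ q, X q ⊆ Icc 0 (hl q))
  (hXne : ∀ q, (X q).Nonempty)

include hX1 hXh hXne in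
lemma exists_pt {n : ℕ} {w : List (Fin 5)} (hw : w ∈ lvl false n) :
    ∃ p, p ∈ X false ∧ ∀ u, u <+: w → p ∈ Dset u := by
  obtain ⟨x₀, hx₀⟩ := hXne (fin false w)
  refine ⟨fmap w x₀, inv_lvl X hX1 hw ⟨x₀, hx₀, rfl⟩, ?_⟩
  intro u hupre
  obtain ⟨v, rfl⟩ := hupre
  have hu : u ∈ lvl false u.length := prefix_mem_lvl hw ⟨v, rfl⟩
  have hlen : (u ++ v).length = n := length_of_mem_lvl hw
  have hv : v ∈ lvl (fin false u) v.length := by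
    have : u ++ v ∈ lvl false (u.length + v.length) := by
      rw [show u.length + v.length = n by rw [← hlen]; simp]
      exact hw
    exact (append_mem_lvl hu).mp this
  rw [fmap_append]
  refine ⟨fmap v x₀, ?_, rfl⟩
  apply fmap_mem_hull hv
  rw [fin_append] at *
  exact hXh _ hx₀

end CutCover

section CutSum

open scoped Classical

variable {t₀ : ℝ} (hpos : 0 < t₀) (hroot : t₀ ^ 3 - t₀ ^ 2 - 2 * t₀ + 1 = 0)
  (hhi : t₀ < 1/2)

include hpos hhi in
lemma wt_nonneg (w : List (Fin 5)) : 0 ≤ t₀ ^ (Mw w) * vv t₀ (fin false w) := by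
  have h1 := va_pos hpos hhi
  have h2 := vb_pos hpos hhi
  have : 0 < vv t₀ (fin false w) := by cases (fin false w) <;> assumption
  positivity

include hpos hroot hhi in
lemma cut_sum {n : ℕ} {F : Finset ℕ} {d' : ℕ → ℝ} {U : ℕ → Set ℝ}
    (hcut : ∀ w ∈ lvl false n, ∃ i ∈ F, ∃ u ∈ cut (d' i) (U i) n, u <+: w) :
    vv t₀ false ≤ ∑ i ∈ F, ∑ u ∈ cut (d' i) (U i) n, t₀ ^ (Mw u) * vv t₀ (fin false u) := by
  set wt : List (Fin 5) → ℝ := fun w => t₀ ^ (Mw w) * vv t₀ (fin false w) with hwt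
  have hwtnn : ∀ w, 0 ≤ wt w := wt_nonneg hpos hhi
  have h1 : vv t₀ false = ∑ w ∈ lvl false n, wt w := (weight_sum hroot false n).symm
  have h2 : ∀ w ∈ lvl false n, wt w ≤
      ∑ i ∈ F, ∑ u ∈ cut (d' i) (U i) n, if u <+: w then wt w else 0 := by
    intro w hw
    obtain ⟨i₀, hi₀, u₀, hu₀, hpre₀⟩ := hcut w hw
    have hitenn : ∀ u : List (Fin 5), (0:ℝ) ≤ if u <+: w then wt w else 0 := by
      intro u
      by_cases h : u <+: w <;> simp [h, hwtnn w]
    calc wt w = (if u₀ <+: w then wt w else 0) := by rw [if_pos hpre₀]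
      _ ≤ ∑ u ∈ cut (d' i₀) (U i₀) n, if u <+: w then wt w else 0 :=
          Finset.single_le_sum (f := fun u => if u <+: w then wt w else 0)
            (fun u _ => hitenn u) hu₀
      _ ≤ _ := Finset.single_le_sum
          (f := fun i => ∑ u ∈ cut (d' i) (U i) n, if u <+: w then wt w else 0)
          (fun i _ => Finset.sum_nonneg fun u _ => hitenn u) hi₀
  have h3 : ∑ w ∈ lvl false n, wt w ≤
      ∑ w ∈ lvl false n, ∑ i ∈ F, ∑ u ∈ cut (d' i) (U i) n, if u <+: w then wt w else 0 :=
    Finset.sum_le_sum h2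
  have h4 : ∑ w ∈ lvl false n, ∑ i ∈ F, ∑ u ∈ cut (d' i) (U i) n,
      (if u <+: w then wt w else 0)
      = ∑ i ∈ F, ∑ u ∈ cut (d' i) (U i) n, ∑ w ∈ lvl false n,
      (if u <+: w then wt w else 0) := by
    rw [Finset.sum_comm]
    exact Finset.sum_congr rfl fun i _ => Finset.sum_comm
  have h5 : ∀ (i : ℕ), ∀ u ∈ cut (d' i) (U i) n,
      ∑ w ∈ lvl false n, (if u <+: w then wt w else 0) = wt u := by
    intro i u hu
    obtain ⟨hlen, hlvl, -⟩ := mem_cut.mp hu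
    rw [← Finset.sum_filter]
    have : n = u.length + (n - u.length) := by omega
    rw [hwt]
    rw [this]
    exact prefix_weight_sum hroot hlvl (n - u.length)
  calc vv t₀ false = ∑ w ∈ lvl false n, wt w := h1
    _ ≤ _ := h3
    _ = ∑ i ∈ F, ∑ u ∈ cut (d' i) (U i) n, ∑ w ∈ lvl false n,
        (if u <+: w then wt w else 0) := h4
    _ = ∑ i ∈ F, ∑ u ∈ cut (d' i) (U i) n, wt u :=
        Finset.sum_congr rfl fun i _ => Finset.sum_congr rfl fun u hu => h5 i u hu

end CutSum

section Lower

open MeasureTheory Metric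
open scoped Classical

variable {t₀ : ℝ} (hpos : 0 < t₀) (hroot : t₀ ^ 3 - t₀ ^ 2 - 2 * t₀ + 1 = 0)
  (hlo : 2/5 < t₀) (hhi : t₀ < 1/2)
  (X : Bool → Set ℝ)
  (hX1 : ∀ q, ∀ e ∈ edges q, fe e '' X (tgt e) ⊆ X q)
  (hXh : ∀ q, X q ⊆ Icc 0 (hl q))
  (hXne : ∀ q, (X q).Nonempty)
  (hXc : IsCompact (X false))

include hpos hroot hlo hhi hX1 hXh hXne hXc in
theorem dim_lower : ENNReal.ofReal (sd t₀) ≤ dimH (X false) := by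
  have hsd := sd_pos hpos hhi
  have hsd1 := sd_le_one hpos hlo
  set d : ℝ≥0 := (sd t₀).toNNReal with hd
  have hdc : ((d : ℝ≥0∞)) = ENNReal.ofReal (sd t₀) := rfl
  have hdr : (d : ℝ) = sd t₀ := Real.coe_toNNReal _ hsd.le
  rw [← hdc]
  -- constants
  have hva := va_pos hpos hhi
  have hvb := vb_pos hpos hhi
  set mx : ℝ := max (vv t₀ false) (vv t₀ true) with hmx
  have hmxpos : 0 < mx := lt_of_lt_of_le hva (le_max_left _ _)
  set c₀ : ℝ := vv t₀ false / (37 * mx) with hc₀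
  have hc₀pos : 0 < c₀ := by positivity
  apply le_dimH_of_hausdorffMeasure_ne_zero (d := d)
  have hmain : ENNReal.ofReal (c₀/2) ≤ μH[(d:ℝ)] (X false) := by
    rw [Measure.hausdorffMeasure_apply]
    refine le_iSup₂_of_le (ENNReal.ofReal (1/4)) (by norm_num) ?_
    refine le_iInf fun t => le_iInf fun hcov => le_iInf fun hdiam => ?_
    -- real diameters
    set dn : ℕ → ℝ := fun i => Metric.diam (t i) with hdn
    have htop : ∀ i, EMetric.diam (t i) ≠ ⊤ := fun i =>
      ne_top_of_le_ne_top ENNReal.ofReal_ne_top (hdiam i)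
    have hbnd : ∀ i, Bornology.IsBounded (t i) := fun i =>
      Metric.isBounded_iff_ediam_ne_top.mpr (htop i)
    have hdnle : ∀ i, dn i ≤ 1/4 := by
      intro i
      have := ENNReal.toReal_mono ENNReal.ofReal_ne_top (hdiam i)
      rwa [ENNReal.toReal_ofReal (by norm_num : (0:ℝ) ≤ 1/4)] at this
    have hdnnn : ∀ i, 0 ≤ dn i := fun i => Metric.diam_nonneg
    -- thickening radii
    set δ : ℕ → ℝ := fun i => min (((c₀/4) * (1/2)^(i+1)) ^ (sd t₀)⁻¹) (1/8) with hδ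
    have hδpos : ∀ i, 0 < δ i := by
      intro i
      apply lt_min _ (by norm_num)
      apply Real.rpow_pos_of_pos
      positivity
    have hδle : ∀ i, δ i ≤ 1/8 := fun i => min_le_right _ _
    set U : ℕ → Set ℝ := fun i => Metric.thickening (δ i) (t i) with hU
    have hUopen : ∀ i, IsOpen (U i) := fun i => Metric.isOpen_thickening
    have hUcov : X false ⊆ ⋃ i, U i :=
      hcov.trans (Set.iUnion_mono fun i => Metric.self_subset_thickening (hδpos i) _)
    obtain ⟨F, hF⟩ := hXc.elim_finite_subcover U hUopen hUcov
    set dU : ℕ → ℝ := fun i => Metric.diam (U i) with hdU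
    have hbndU : ∀ i, Bornology.IsBounded (U i) := fun i => (hbnd i).thickening
    have hdUle : ∀ i, dU i ≤ dn i + 2 * δ i := fun i =>
      Metric.diam_thickening_le _ (hδpos i).le
    have hdUlt2 : ∀ i, dU i < 2 := by
      intro i
      have h1 := hdnle i
      have h2 := hδle i
      have := hdUle i
      linarith
    have hdUnn : ∀ i, 0 ≤ dU i := fun i => Metric.diam_nonneg
    -- choose the level n
    have hFne : ∃ ε > 0, ∀ i ∈ F, ε ≤ δ i := by
      refine ⟨(insert (1:ℝ) (F.image δ)).min' ⟨1, Finset.mem_insert_self _ _⟩, ?_, ?_⟩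
      · rcases Finset.mem_insert.mp ((insert (1:ℝ) (F.image δ)).min'_mem
          ⟨1, Finset.mem_insert_self _ _⟩) with h | h
        · rw [h]; norm_num
        · obtain ⟨i, -, hieq⟩ := Finset.mem_image.mp h
          rw [← hieq]
          exact hδpos i
      · intro i hi
        exact Finset.min'_le _ _ (Finset.mem_insert_of_mem (Finset.mem_image_of_mem δ hi))
    obtain ⟨ε, hεpos, hεle⟩ := hFne
    obtain ⟨n, hn⟩ := exists_pow_lt_of_lt_one (show (0:ℝ) < ε/4 by positivity)
      (show (1:ℝ)/3 < 1 by norm_num)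
    -- the covering property of cuts
    have hcutcover : ∀ w ∈ lvl false n, ∃ i ∈ F, ∃ u ∈ cut (dU i) (U i) n, u <+: w := by
      intro w hw
      obtain ⟨p, hpX, hpD⟩ := exists_pt X hX1 hXh hXne hw
      obtain ⟨i, hiF, hpU⟩ := Set.mem_iUnion₂.mp (hF hpX)
      have hUne : (U i).Nonempty := ⟨p, hpU⟩
      have hδdU : δ i ≤ dU i := thickening_diam_ge (hδpos i) (hbnd i) hUne
      have hsmall : wdt w ≤ dU i := by
        have h1 : wdt w ≤ 4 * (1/3) ^ (Mw w) := wdt_le w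
        have h2 : ((1:ℝ)/3) ^ (Mw w) ≤ (1/3) ^ n := by
          apply pow_le_pow_of_le_one (by norm_num) (by norm_num)
          rw [← length_of_mem_lvl hw]
          exact Mw_ge_length w
        have h3 := hεle i hiF
        nlinarith
      obtain ⟨u, hu, hupre⟩ := exists_cut_elem hw (hdUlt2 i) hsmall hpU hpD
      exact ⟨i, hiF, u, hu, hupre⟩
    have hsum := cut_sum hpos hroot hhi hcutcover
    -- per-i weight bound
    have hperi : ∀ i ∈ F, ∑ u ∈ cut (dU i) (U i) n, t₀ ^ (Mw u) * vv t₀ (fin false u)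
        ≤ 37 * mx * (dU i) ^ (sd t₀) := by
      intro i hiF
      rcases (U i).eq_empty_or_nonempty with hUe | hUne
      · have : cut (dU i) (U i) n = ∅ := by
          rw [Finset.eq_empty_iff_forall_notMem]
          intro u hu
          obtain ⟨-, -, -, -, -, ⟨p, -, hpU⟩⟩ := mem_cut.mp hu
          rw [hUe] at hpU
          exact hpU
        rw [this, Finset.sum_empty]
        positivity
      · have hdUpos : 0 < dU i := by
          have := thickening_diam_ge (hδpos i) (hbnd i) hUne
          linarith [hδpos i]
        have hcard := cut_card (d' := dU i) (U := U i) (n := n) hdUpos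
          (fun x hx y hy => Metric.dist_le_diam_of_mem (hbndU i) hx hy)
        have hterm : ∀ u ∈ cut (dU i) (U i) n,
            t₀ ^ (Mw u) * vv t₀ (fin false u) ≤ mx * (dU i) ^ (sd t₀) := by
          intro u hu
          have hvle : vv t₀ (fin false u) ≤ mx := by
            cases (fin false u) <;> [exact le_max_left _ _; exact le_max_right _ _]
          have hwle : wdt u ≤ dU i := (mem_cut.mp hu).2.2.1
          have h13 : ((1:ℝ)/3) ^ (Mw u) ≤ dU i := by
            have := wdt_ge u
            linarith
          have hrp : t₀ ^ (Mw u) ≤ (dU i) ^ (sd t₀) := by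
            rw [← rpow_third hpos (Mw u)]
            exact Real.rpow_le_rpow (by positivity) h13 hsd.le
          have ht0nn : (0:ℝ) ≤ t₀ ^ (Mw u) := by positivity
          have hvnn : 0 ≤ vv t₀ (fin false u) := by
            cases (fin false u) <;> [exact hva.le; exact hvb.le]
          calc t₀ ^ (Mw u) * vv t₀ (fin false u) ≤ (dU i) ^ (sd t₀) * mx :=
                mul_le_mul hrp hvle hvnn (by positivity)
            _ = mx * (dU i) ^ (sd t₀) := by ring
        calc ∑ u ∈ cut (dU i) (U i) n, t₀ ^ (Mw u) * vv t₀ (fin false u)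
            ≤ ∑ _u ∈ cut (dU i) (U i) n, mx * (dU i) ^ (sd t₀) :=
              Finset.sum_le_sum hterm
          _ = (cut (dU i) (U i) n).card * (mx * (dU i) ^ (sd t₀)) := by
              rw [Finset.sum_const, nsmul_eq_mul]
          _ ≤ 37 * (mx * (dU i) ^ (sd t₀)) := by
              apply mul_le_mul_of_nonneg_right _ (by positivity)
              exact_mod_cast hcard
          _ = 37 * mx * (dU i) ^ (sd t₀) := by ring
    -- Σ (dU i)^sd ≥ c₀
    have hsum2 : c₀ ≤ ∑ i ∈ F, (dU i) ^ (sd t₀) := by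
      have h1 : vv t₀ false ≤ ∑ i ∈ F, 37 * mx * (dU i) ^ (sd t₀) :=
        hsum.trans (Finset.sum_le_sum hperi)
      have h2 : ∑ i ∈ F, 37 * mx * (dU i) ^ (sd t₀)
          = 37 * mx * ∑ i ∈ F, (dU i) ^ (sd t₀) := by
        rw [Finset.mul_sum]
      rw [h2] at h1
      rw [hc₀, div_le_iff₀ (by positivity)]
      linarith
    -- split dU^sd
    have hsplit : ∀ i ∈ F, (dU i) ^ (sd t₀) ≤ (dn i) ^ (sd t₀) + (c₀/2) * (1/2)^(i+1) := by
      intro i _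
      have h1 : (dU i) ^ (sd t₀) ≤ (dn i + 2 * δ i) ^ (sd t₀) :=
        Real.rpow_le_rpow (hdUnn i) (hdUle i) hsd.le
      have h2 : (dn i + 2 * δ i) ^ (sd t₀) ≤ (dn i) ^ (sd t₀) + (2 * δ i) ^ (sd t₀) :=
        real_rpow_subadd (hdnnn i) (by positivity) hsd.le hsd1
      have h3 : (2 * δ i) ^ (sd t₀) ≤ 2 * (δ i) ^ (sd t₀) := by
        rw [Real.mul_rpow (by norm_num) (hδpos i).le]
        apply mul_le_mul_of_nonneg_right _ (by positivity)
        calc (2:ℝ) ^ (sd t₀) ≤ (2:ℝ) ^ (1:ℝ) :=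
              Real.rpow_le_rpow_of_exponent_le (by norm_num) hsd1
          _ = 2 := by norm_num
      have h4 : (δ i) ^ (sd t₀) ≤ (c₀/4) * (1/2)^(i+1) := by
        have h5 : δ i ≤ ((c₀/4) * (1/2)^(i+1)) ^ (sd t₀)⁻¹ := min_le_left _ _
        calc (δ i) ^ (sd t₀) ≤ ((((c₀/4) * (1/2)^(i+1)) ^ (sd t₀)⁻¹)) ^ (sd t₀) :=
              Real.rpow_le_rpow (hδpos i).le h5 hsd.le
          _ = (c₀/4) * (1/2)^(i+1) := Real.rpow_inv_rpow (by positivity) hsd.ne'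
      nlinarith
    have hfinal : c₀/2 ≤ ∑ i ∈ F, (dn i) ^ (sd t₀) := by
      have h1 : ∑ i ∈ F, (dU i) ^ (sd t₀)
          ≤ ∑ i ∈ F, ((dn i) ^ (sd t₀) + (c₀/2) * (1/2)^(i+1)) :=
        Finset.sum_le_sum hsplit
      rw [Finset.sum_add_distrib] at h1
      have h2 : ∑ i ∈ F, (c₀/2) * (1/2:ℝ)^(i+1) ≤ c₀/2 := by
        rw [← Finset.mul_sum]
        have := geom_tail_sum F
        nlinarith
      linarith [hsum2]
    -- pass to ENNReal
    calc ENNReal.ofReal (c₀/2) ≤ ENNReal.ofReal (∑ i ∈ F, (dn i) ^ (sd t₀)) :=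
          ENNReal.ofReal_le_ofReal hfinal
      _ = ∑ i ∈ F, ENNReal.ofReal ((dn i) ^ (sd t₀)) :=
          ENNReal.ofReal_sum_of_nonneg (fun i _ => by positivity)
      _ ≤ ∑ i ∈ F, ⨆ _ : (t i).Nonempty, EMetric.diam (t i) ^ (d:ℝ) := by
          apply Finset.sum_le_sum
          intro i _
          rcases (t i).eq_empty_or_nonempty with hte | htne
          · have : dn i = 0 := by rw [hdn]; simp [hte]
            rw [this, Real.zero_rpow hsd.ne', ENNReal.ofReal_zero]
            exact zero_le
          · rw [ciSup_pos htne]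
            have hed : EMetric.diam (t i) = ENNReal.ofReal (dn i) := by
              rw [hdn]
              exact (ENNReal.ofReal_toReal (htop i)).symm
            rw [hed, hdr, ENNReal.ofReal_rpow_of_nonneg (hdnnn i) hsd.le]
      _ ≤ ∑' i, ⨆ _ : (t i).Nonempty, EMetric.diam (t i) ^ (d:ℝ) :=
          ENNReal.sum_le_tsum F
  intro h0
  rw [h0] at hmain
  have h1 : c₀/2 ≤ 0 := ENNReal.ofReal_eq_zero.mp (le_antisymm hmain zero_le)
  linarith

end Lower

end St16

open Pointwise

/-- for the attractor `K` of the IFS `{x/3, (x+8)/9}`, the Hausdorff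
dimension of `K+K` is `ln t₀ / (- ln 3)`, where `t₀` is the smallest positive root of
`t³ - t² - 2t + 1 = 0`. -/
theorem statement16 (K : Set ℝ)
    (hKne : K.Nonempty) (hKc : IsCompact K)
    (hK : K = (fun x => x / 3) '' K ∪ (fun x => (x + 8) / 9) '' K)
    (t₀ : ℝ)
    (ht₀ : IsLeast {t : ℝ | 0 < t ∧ t ^ 3 - t ^ 2 - 2 * t + 1 = 0} t₀) :
    dimH (K + K) = ENNReal.ofReal (Real.log t₀ / (- Real.log 3)) := by
  have hpos := St16.t0_pos ht₀
  have hroot := St16.t0_root ht₀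
  have hlo := St16.t0_gt ht₀
  have hhi := St16.t0_lt_half ht₀
  have hX1 := St16.XS_inv hK
  have hX2 := St16.XS_cover hK
  have hXh := St16.XS_hull hKne hKc hK
  have hXne := St16.XS_nonempty hKne
  have hXc : IsCompact (St16.XS K false) := by
    have : St16.XS K false = K + K := rfl
    rw [this]
    exact hKc.add hKc
  have hfalse : St16.XS K false = K + K := rfl
  have hgoal : ENNReal.ofReal (Real.log t₀ / (- Real.log 3)) = ENNReal.ofReal (St16.sd t₀) := rfl
  rw [hgoal, ← hfalse]
  exact le_antisymm
    (St16.dim_upper hpos hroot hlo hhi (St16.XS K) hX2 hXh)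
    (St16.dim_lower hpos hroot hlo hhi (St16.XS K) hX1 hXh hXne hXc)
end

section
/- Let β > 1, let K₁ ⊂ ℝ be the attractor of the IFS {f₁(x) = x/β, f₂(x) = (x+2)/β} and K₂ ⊂ ℝ the attractor of the IFS {g₁(x) = x/β, g₂(x) = x/β² + 2/β + 2/β²}. Then K₁+K₂ is the self-similar set with IFS {φ₁(x) = x/β, φ₂(x) = (x+2)/β, φ₃(x) = x/β² + 2/β + 4/β², φ₄(x) = x/β² + 4/β + 2/β², φ₅(x) = x/β² + 4/β + 4/β²}; that is, K₁+K₂ = φ₁(K₁+K₂) ∪ φ₂(K₁+K₂) ∪ φ₃(K₁+K₂) ∪ φ₄(K₁+K₂) ∪ φ₅(K₁+K₂). -/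
open Pointwise

/-- for `K₁` the attractor of `{x/β, (x+2)/β}` and `K₂` the attractor of
`{x/β, x/β² + 2/β + 2/β²}`, the sumset `K₁+K₂` is the self-similar set of the IFS
`{φ₁,…,φ₅}` given below. -/
theorem statement17 (β : ℝ) (hβ : 1 < β)
    (K₁ K₂ : Set ℝ)
    (hK₁ne : K₁.Nonempty) (hK₁c : IsCompact K₁)
    (hK₁ : K₁ = (fun x => x / β) '' K₁ ∪ (fun x => (x + 2) / β) '' K₁)
    (hK₂ne : K₂.Nonempty) (hK₂c : IsCompact K₂)
    (hK₂ : K₂ = (fun x => x / β) '' K₂ ∪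
      (fun x => x / β ^ 2 + 2 / β + 2 / β ^ 2) '' K₂) :
    K₁ + K₂ =
      (fun x => x / β) '' (K₁ + K₂) ∪
      (fun x => (x + 2) / β) '' (K₁ + K₂) ∪
      (fun x => x / β ^ 2 + 2 / β + 4 / β ^ 2) '' (K₁ + K₂) ∪
      (fun x => x / β ^ 2 + 4 / β + 2 / β ^ 2) '' (K₁ + K₂) ∪
      (fun x => x / β ^ 2 + 4 / β + 4 / β ^ 2) '' (K₁ + K₂) := by
  have hβ0 : β ≠ 0 := ne_of_gt (by linarith)
  have hf1 : ∀ a ∈ K₁, a / β ∈ K₁ := by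
    intro a ha; rw [hK₁]; exact Or.inl ⟨a, ha, rfl⟩
  have hf2 : ∀ a ∈ K₁, (a + 2) / β ∈ K₁ := by
    intro a ha; rw [hK₁]; exact Or.inr ⟨a, ha, rfl⟩
  have hg1 : ∀ b ∈ K₂, b / β ∈ K₂ := by
    intro b hb; rw [hK₂]; exact Or.inl ⟨b, hb, rfl⟩
  have hg2 : ∀ b ∈ K₂, b / β ^ 2 + 2 / β + 2 / β ^ 2 ∈ K₂ := by
    intro b hb; rw [hK₂]; exact Or.inr ⟨b, hb, rfl⟩
  ext s
  constructor
  · rintro hs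
    rw [Set.mem_add] at hs
    obtain ⟨a, ha, b, hb, rfl⟩ := hs
    rw [hK₂] at hb
    rcases hb with ⟨b, hb, rfl⟩ | ⟨b, hb, rfl⟩
    · -- y = b/β
      rw [hK₁] at ha
      rcases ha with ⟨a, ha, rfl⟩ | ⟨a, ha, rfl⟩
      · refine Or.inl (Or.inl (Or.inl (Or.inl ⟨a + b, ?_, by ring⟩)))
        exact Set.add_mem_add ha hb
      · refine Or.inl (Or.inl (Or.inl (Or.inr ⟨a + b, Set.add_mem_add ha hb, by ring⟩)))
    · -- y = b/β² + 2/β + 2/β²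
      rw [hK₁] at ha
      rcases ha with ⟨a, ha, rfl⟩ | ⟨a, ha, rfl⟩
      · -- x = a/β ; expand a again
        rw [hK₁] at ha
        rcases ha with ⟨c, hc, rfl⟩ | ⟨c, hc, rfl⟩
        · -- s = c/β² + b/β² + 2/β + 2/β² ∈ φ₂(S), witness (c+2)/β + b/β
          refine Or.inl (Or.inl (Or.inl (Or.inr
            ⟨(c + 2) / β + b / β, Set.add_mem_add (hf2 c hc) (hg1 b hb), ?_⟩)))
          field_simp
          ring
        · -- s ∈ φ₃(S)
          refine Or.inl (Or.inl (Or.inr ⟨c + b, Set.add_mem_add hc hb, ?_⟩))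
          field_simp
          ring
      · -- x = (a+2)/β ; expand a again
        rw [hK₁] at ha
        rcases ha with ⟨c, hc, rfl⟩ | ⟨c, hc, rfl⟩
        · -- s ∈ φ₄(S)
          refine Or.inl (Or.inr ⟨c + b, Set.add_mem_add hc hb, ?_⟩)
          field_simp
          ring
        · -- s ∈ φ₅(S)
          refine Or.inr ⟨c + b, Set.add_mem_add hc hb, ?_⟩
          field_simp
          ring
  · rintro ((((⟨z, hz, rfl⟩ | ⟨z, hz, rfl⟩) | ⟨z, hz, rfl⟩) | ⟨z, hz, rfl⟩) | ⟨z, hz, rfl⟩) <;>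
      rw [Set.mem_add] at hz <;> obtain ⟨a, ha, b, hb, rfl⟩ := hz <;> rw [Set.mem_add]
    · exact ⟨a / β, hf1 a ha, b / β, hg1 b hb, by ring⟩
    · exact ⟨(a + 2) / β, hf2 a ha, b / β, hg1 b hb, by ring⟩
    · refine ⟨(a + 2) / β / β, hf1 _ (hf2 a ha), b / β ^ 2 + 2 / β + 2 / β ^ 2, hg2 b hb, ?_⟩
      field_simp
      ring
    · refine ⟨(a / β + 2) / β, hf2 _ (hf1 a ha), b / β ^ 2 + 2 / β + 2 / β ^ 2, hg2 b hb, ?_⟩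
      field_simp
      ring
    · refine ⟨((a + 2) / β + 2) / β, hf2 _ (hf2 a ha), b / β ^ 2 + 2 / β + 2 / β ^ 2, hg2 b hb, ?_⟩
      field_simp
      ring
end

section
/- Let β = 3 and let the digital sets be D₁ = D₂ = {(0), (2,2)} (coming from the IFS {g₁(x) = x/3, g₂(x) = (x+8)/9}, where the map g₂ is represented by the block (2,2) since 8/9 = 2/3 + 2/9). Then the set of primitive Matchings generated by D₁ and D₂ is exactly { (0), (2,2), (4,4) } ∪ { (2,4,4,…,4,2) : the block has j ≥ 1 middle entries equal to 4 }. -/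
open Finset Pointwise

namespace S18

def Pd : Fin 2 → List ℝ := ![[(0:ℝ)], [2, 2]]

def flat (l : List (Fin 2)) : List ℝ := (l.map Pd).flatten

@[simp] lemma flat_nil : flat [] = [] := rfl

@[simp] lemma Pd0 : Pd 0 = [0] := rfl
@[simp] lemma Pd1 : Pd 1 = [2, 2] := rfl

lemma Pd_cases (i : Fin 2) : Pd i = [0] ∨ Pd i = [2, 2] := by
  fin_cases i
  · exact Or.inl rfl
  · exact Or.inr rfl

@[simp] lemma flat_cons (i : Fin 2) (t : List (Fin 2)) : flat (i :: t) = Pd i ++ flat t := by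
  simp [flat]

lemma flat_eq_nil {l : List (Fin 2)} (h : (flat l).length = 0) : l = [] := by
  cases l with
  | nil => rfl
  | cons i t =>
    exfalso
    rcases Pd_cases i with hi | hi <;>
      simp only [flat_cons, hi, List.length_append, List.length_cons, List.length_nil] at h <;>
      omega

lemma matching_append {u v : List ℝ} (hu : IsMatching Pd Pd u) (hv : IsMatching Pd Pd v) :
    IsMatching Pd Pd (u ++ v) := by
  obtain ⟨is1, js1, h1, h2, h3, h4, h5⟩ := hu
  obtain ⟨is2, js2, g1, g2, g3, g4, g5⟩ := hv
  refine ⟨is1 ++ is2, js1 ++ js2, by simp [h1], by simp [h2], ?_, ?_, ?_⟩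
  · simp only [List.map_append, List.flatten_append, List.length_append, h3, g3]
  · simp only [List.map_append, List.flatten_append, List.length_append, h4, g4]
  · simp only [List.map_append, List.flatten_append]
    rw [List.zipWith_append (h3.trans h4.symm), ← h5, ← g5]

lemma off_match (a : ℕ) :
    ∃ is js : List (Fin 2), (flat is).length = (flat js).length + 1 ∧
      List.replicate a (4:ℝ) ++ [2] = List.zipWith (· + ·) (flat is) (2 :: flat js) := by
  induction a with
  | zero =>
    refine ⟨[0], [], ?_, ?_⟩
    · simp only [flat_cons, Pd0, flat_nil, List.append_nil, List.length_cons,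
        List.length_nil]
    · simp only [flat_cons, Pd0, flat_nil, List.append_nil, List.replicate_zero,
        List.nil_append, List.zipWith_cons_cons, List.zipWith_nil_right]
      norm_num
  | succ a ih =>
    obtain ⟨is, js, hlen, heq⟩ := ih
    refine ⟨1 :: js, is, ?_, ?_⟩
    · simp only [flat_cons, Pd1, List.length_append, List.length_cons, List.length_nil]
      omega
    · rw [List.replicate_succ]
      simp only [flat_cons, Pd1, List.cons_append, List.nil_append,
        List.zipWith_cons_cons]
      rw [show (2:ℝ) + 2 = 4 by norm_num]
      rw [List.zipWith_comm_of_comm add_comm, heq]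




inductive InS : List ℝ → Prop
  | zero : InS [0]
  | two : InS [2, 2]
  | four : InS [4, 4]
  | mid (j : ℕ) (hj : 1 ≤ j) : InS ([2] ++ List.replicate j 4 ++ [2])

inductive CS : List ℝ → Prop
  | single {w : List ℝ} : InS w → CS w
  | cons {u v : List ℝ} : InS u → CS v → CS (u ++ v)

lemma InS_ne_nil {w : List ℝ} (h : InS w) : w ≠ [] := by
  cases h <;> simp

lemma CS_ne_nil {w : List ℝ} (h : CS w) : w ≠ [] := by
  cases h with
  | single h => exact InS_ne_nil h
  | cons hu _ => simp [InS_ne_nil hu]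

lemma matching_InS {w : List ℝ} (h : InS w) : IsMatching Pd Pd w := by
  cases h with
  | zero => exact ⟨[0], [0], by simp, by simp, by simp, by simp, by norm_num⟩
  | two => exact ⟨[1], [0, 0], by simp, by simp, by simp, by simp, by norm_num⟩
  | four => exact ⟨[1], [1], by simp, by simp, by simp, by simp, by norm_num⟩
  | mid j hj =>
    obtain ⟨is, js, hlen, heq⟩ := off_match j
    have hj' : (flat js).length = j := by
      have := congrArg List.length heq
      simp only [List.length_append, List.length_replicate, List.length_cons,
        List.length_nil, List.length_zipWith, hlen] at this
      omega
    refine ⟨1 :: js, 0 :: is, by simp, by simp, ?_, ?_, ?_⟩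
    · show (flat (1 :: js)).length = _
      simp only [flat_cons, Pd1, List.length_append, List.length_cons, List.length_nil,
        List.length_replicate]
      omega
    · show (flat (0 :: is)).length = _
      simp only [flat_cons, Pd0, List.length_append, List.length_cons, List.length_nil,
        List.length_replicate]
      omega
    · show _ = List.zipWith _ (flat (1 :: js)) (flat (0 :: is))
      simp only [flat_cons, Pd1, Pd0, List.cons_append, List.nil_append,
        List.zipWith_cons_cons]
      rw [show (2:ℝ) + 0 = 2 by norm_num]
      rw [List.zipWith_comm_of_comm add_comm, ← heq]

lemma matching_CS {w : List ℝ} (h : CS w) : IsMatching Pd Pd w := by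
  induction h with
  | single h => exact matching_InS h
  | cons hu _ ih => exact matching_append (matching_InS hu) ih

lemma sum_zipWith {X Y : List ℝ} (h : X.length = Y.length) :
    (List.zipWith (· + ·) X Y).sum = X.sum + Y.sum := by
  induction X generalizing Y with
  | nil => cases Y <;> simp at h ⊢
  | cons x xs ih =>
    cases Y with
    | nil => simp at h
    | cons y ys =>
      simp only [List.length_cons, Nat.add_right_cancel_iff] at h
      simp [ih h]; ring

lemma flat_sum (l : List (Fin 2)) : ∃ n : ℕ, (flat l).sum = 4 * n := by
  induction l with
  | nil => exact ⟨0, by simp⟩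
  | cons i t ih =>
    obtain ⟨n, hn⟩ := ih
    rcases Pd_cases i with hi | hi
    · exact ⟨n, by simp [hi, hn]⟩
    · refine ⟨n + 1, ?_⟩
      simp only [flat_cons, hi, List.sum_append, hn, List.sum_cons, List.sum_nil]
      push_cast; ring

lemma matching_sum {w : List ℝ} (h : IsMatching Pd Pd w) : ∃ n : ℕ, w.sum = 4 * n := by
  obtain ⟨is, js, _, _, h3, h4, h5⟩ := h
  obtain ⟨n, hn⟩ := flat_sum is
  obtain ⟨m, hm⟩ := flat_sum js
  refine ⟨n + m, ?_⟩
  rw [h5, sum_zipWith (h3.trans h4.symm)]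
  rw [show (is.map Pd).flatten = flat is from rfl, show (js.map Pd).flatten = flat js from rfl,
    hn, hm]
  push_cast; ring

lemma not_matching_prefix (a : ℕ) :
    ¬ IsMatching Pd Pd ([2] ++ List.replicate a (4:ℝ)) := by
  intro h
  obtain ⟨n, hn⟩ := matching_sum h
  simp only [List.sum_append, List.sum_cons, List.sum_nil, List.sum_replicate,
    nsmul_eq_mul] at hn
  have h2 : ((1 + 2 * a : ℕ) : ℝ) = ((2 * n : ℕ) : ℝ) := by push_cast; linarith
  have := Nat.cast_injective h2
  omega

lemma matching_len1 {c : ℝ} (h : IsMatching Pd Pd [c]) : c = 0 := by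
  obtain ⟨is, js, h1, h2, h3, h4, h5⟩ := h
  have key : ∀ l : List (Fin 2), l ≠ [] → (flat l).length = 1 → flat l = [0] := by
    intro l hne hlen
    cases l with
    | nil => exact absurd rfl hne
    | cons i t =>
      rcases Pd_cases i with hi | hi <;>
        simp only [flat_cons, hi, List.length_append, List.length_cons,
          List.length_nil] at hlen ⊢
      · have : t = [] := flat_eq_nil (by omega)
        simp [this]
      · omega
  have hlen1 : ([c] : List ℝ).length = 1 := rfl
  have his := key is h1 (by rw [show (is.map Pd).flatten = flat is from rfl] at h3; omega)
  have hjs := key js h2 (by rw [show (js.map Pd).flatten = flat js from rfl] at h4; omega)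
  rw [show (is.map Pd).flatten = flat is from rfl, show (js.map Pd).flatten = flat js from rfl,
    his, hjs] at h5
  simp at h5
  exact h5

lemma head_InS (a : ℕ) : InS ([2] ++ List.replicate a (4:ℝ) ++ [2]) := by
  cases a with
  | zero => simpa using InS.two
  | succ n => exact InS.mid (n + 1) (by omega)

lemma mainC (L : ℕ) :
    (∀ is js : List (Fin 2), is ≠ [] → js ≠ [] → (flat is).length = L → (flat js).length = L →
      CS (List.zipWith (· + ·) (flat is) (flat js))) ∧
    (∀ is js : List (Fin 2), (flat is).length = L → (flat js).length + 1 = L →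
      ∃ (a : ℕ) (r : List ℝ), (r = [] ∨ CS r) ∧
        List.zipWith (· + ·) (flat is) (2 :: flat js) =
          List.replicate a 4 ++ [2] ++ r) := by
  induction L using Nat.strong_induction_on with
  | _ L IH =>
  have haux : ∀ is js : List (Fin 2), (flat is).length = L → (flat js).length + 1 = L →
      ∃ (a : ℕ) (r : List ℝ), (r = [] ∨ CS r) ∧
        List.zipWith (· + ·) (flat is) (2 :: flat js) =
          List.replicate a 4 ++ [2] ++ r := by
    intro is js h1 h2
    cases is with
    | nil => simp only [flat_nil, List.length_nil] at h1; omega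
    | cons i t =>
      rcases Pd_cases i with hi | hi
      · -- head block [0]
        simp only [flat_cons, hi, List.length_append, List.length_cons,
          List.length_nil] at h1
        have hlt : (flat t).length = (flat js).length := by omega
        simp only [flat_cons, hi, List.cons_append, List.nil_append,
          List.zipWith_cons_cons]
        rw [show (0:ℝ) + 2 = 2 by norm_num]
        by_cases hz : (flat t).length = 0
        · have ht : t = [] := flat_eq_nil hz
          have hjs : js = [] := flat_eq_nil (by omega)
          exact ⟨0, [], Or.inl rfl, by simp [ht, hjs]⟩
        · have ht : t ≠ [] := fun h => hz (by simp [h])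
          have hjs : js ≠ [] := fun h => hz (by rw [h] at hlt; simpa using hlt)
          have hcs := (IH (flat t).length (by omega)).1 t js ht hjs rfl hlt.symm
          exact ⟨0, _, Or.inr hcs, by simp⟩
      · -- head block [2,2]
        simp only [flat_cons, hi, List.length_append, List.length_cons,
          List.length_nil] at h1
        simp only [flat_cons, hi, List.cons_append, List.nil_append,
          List.zipWith_cons_cons]
        rw [show (2:ℝ) + 2 = 4 by norm_num]
        have hlen : (flat js).length = (flat t).length + 1 := by omega
        have hrec := (IH (flat js).length (by omega)).2 js t rfl hlen.symm
        obtain ⟨a, r, hr, heq⟩ := hrec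
        refine ⟨a + 1, r, hr, ?_⟩
        rw [List.zipWith_comm_of_comm add_comm, heq, List.replicate_succ]
        simp
  refine ⟨?_, haux⟩
  intro is js hne1 hne2 h1 h2
  have key : ∀ t s : List (Fin 2), 2 + (flat t).length = L → 1 + (flat s).length = L →
      CS (List.zipWith (· + ·) ((2:ℝ) :: 2 :: flat t) ((0:ℝ) :: flat s)) := by
    intro t s ht hs
    simp only [List.zipWith_cons_cons]
    rw [show (2:ℝ) + 0 = 2 by norm_num]
    have hlen : (flat s).length = (flat t).length + 1 := by omega
    have hrec := (IH (flat s).length (by omega)).2 s t rfl hlen.symm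
    obtain ⟨a, r, hr, heq⟩ := hrec
    rw [List.zipWith_comm_of_comm add_comm, heq]
    have hsplit : (2:ℝ) :: (List.replicate a 4 ++ [2] ++ r) =
        ([2] ++ List.replicate a (4:ℝ) ++ [2]) ++ r := by simp
    rw [hsplit]
    rcases hr with hr | hr
    · rw [hr, List.append_nil]; exact CS.single (head_InS a)
    · exact CS.cons (head_InS a) hr
  cases is with
  | nil => exact absurd rfl hne1
  | cons i t =>
    cases js with
    | nil => exact absurd rfl hne2
    | cons j s =>
      rcases Pd_cases i with hi | hi <;> rcases Pd_cases j with hj | hj <;>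
        simp only [flat_cons, hi, hj, List.length_append, List.length_cons,
          List.length_nil] at h1 h2 <;>
        simp only [flat_cons, hi, hj, List.cons_append, List.nil_append]
      · -- (0,0)
        simp only [List.zipWith_cons_cons]
        rw [show (0:ℝ) + 0 = 0 by norm_num]
        by_cases hz : (flat t).length = 0
        · have ht : t = [] := flat_eq_nil hz
          have hs : s = [] := flat_eq_nil (by omega)
          rw [ht, hs]
          simpa using CS.single InS.zero
        · have ht : t ≠ [] := fun h => hz (by simp [h])
          have hs : s ≠ [] := fun h => hz (by simp [h] at h2; omega)
          have hcs := (IH (flat t).length (by omega)).1 t s ht hs rfl (by omega)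
          have he : (0:ℝ) :: List.zipWith (· + ·) (flat t) (flat s) =
              [0] ++ List.zipWith (· + ·) (flat t) (flat s) := by simp
          rw [he]
          exact CS.cons InS.zero hcs
      · -- (0,1)
        rw [List.zipWith_comm_of_comm add_comm]
        exact key s t (by omega) (by omega)
      · -- (1,0)
        exact key t s (by omega) (by omega)
      · -- (1,1)
        simp only [List.zipWith_cons_cons]
        rw [show (2:ℝ) + 2 = 4 by norm_num]
        by_cases hz : (flat t).length = 0
        · have ht : t = [] := flat_eq_nil hz
          have hs : s = [] := flat_eq_nil (by omega)
          rw [ht, hs]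
          simpa using CS.single InS.four
        · have ht : t ≠ [] := fun h => hz (by simp [h])
          have hs : s ≠ [] := fun h => hz (by simp [h] at h2; omega)
          have hcs := (IH (flat t).length (by omega)).1 t s ht hs rfl (by omega)
          have he : (4:ℝ) :: (4:ℝ) :: List.zipWith (· + ·) (flat t) (flat s) =
              [4, 4] ++ List.zipWith (· + ·) (flat t) (flat s) := by simp
          rw [he]
          exact CS.cons InS.four hcs

lemma matching_to_CS {w : List ℝ} (h : IsMatching Pd Pd w) : CS w := by
  obtain ⟨is, js, h1, h2, h3, h4, h5⟩ := h
  rw [h5]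
  exact (mainC w.length).1 is js h1 h2 h3 h4

lemma take_mid {j k : ℕ} (hk1 : 1 ≤ k) (hk2 : k ≤ j + 1) :
    ([2] ++ List.replicate j (4:ℝ) ++ [2]).take k = [2] ++ List.replicate (k - 1) (4:ℝ) := by
  have h1 : ([2] ++ List.replicate j (4:ℝ) ++ [2]) = 2 :: (List.replicate j (4:ℝ) ++ [2]) := by
    simp
  rw [h1]
  obtain ⟨k', rfl⟩ : ∃ k', k = k' + 1 := ⟨k - 1, by omega⟩
  rw [List.take_succ_cons]
  rw [List.take_append_of_le_length (by simp; omega)]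
  rw [List.take_replicate]
  simp [Nat.min_eq_left (by omega : k' ≤ j)]

lemma prim_of_InS {w : List ℝ} (h : InS w) : IsPrimMatching Pd Pd w := by
  refine ⟨matching_InS h, ?_⟩
  rintro ⟨u, v, hune, hvne, hmu, hmv, heq⟩
  have hu1 : 1 ≤ u.length := List.length_pos_iff.mpr hune
  have hv1 : 1 ≤ v.length := List.length_pos_iff.mpr hvne
  have hlen := congrArg List.length heq
  simp only [List.length_append] at hlen
  cases h with
  | zero => simp at hlen; omega
  | two =>
    simp only [List.length_cons, List.length_nil] at hlen
    have hu2 : u.length = 1 := by omega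
    obtain ⟨c, rfl⟩ := List.length_eq_one_iff.mp hu2
    have hc : c = 2 := by
      have := congrArg (fun l => l.headI) heq
      exact (by simpa using this : _ = c).symm
    have := matching_len1 hmu
    rw [hc] at this
    norm_num at this
  | four =>
    simp only [List.length_cons, List.length_nil] at hlen
    have hu2 : u.length = 1 := by omega
    obtain ⟨c, rfl⟩ := List.length_eq_one_iff.mp hu2
    have hc : c = 4 := by
      have := congrArg (fun l => l.headI) heq
      exact (by simpa using this : _ = c).symm
    have := matching_len1 hmu
    rw [hc] at this
    norm_num at this
  | mid j hj =>
    simp only [List.length_append, List.length_cons, List.length_nil,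
      List.length_replicate] at hlen
    have hk2 : u.length ≤ j + 1 := by omega
    have hu_eq : u = [2] ++ List.replicate (u.length - 1) (4:ℝ) := by
      rw [← take_mid hu1 hk2, heq, List.take_left]
    rw [hu_eq] at hmu
    exact not_matching_prefix _ hmu

end S18

/-- for `D₁ = D₂ = {(0), (2,2)}` the set of primitive Matchings is exactly
`{(0), (2,2), (4,4)} ∪ {(2,4,…,4,2) : j ≥ 1 middle entries equal to 4}`. -/
theorem statement18 :
    {w : List ℝ | IsPrimMatching ![[(0 : ℝ)], [2, 2]] ![[(0 : ℝ)], [2, 2]] w} =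
      ({[(0 : ℝ)], [2, 2], [4, 4]} : Set (List ℝ)) ∪
      {w : List ℝ | ∃ j : ℕ, 1 ≤ j ∧ w = [(2 : ℝ)] ++ List.replicate j (4 : ℝ) ++ [(2 : ℝ)]} := by
  have hP : (![[(0 : ℝ)], [2, 2]] : Fin 2 → List ℝ) = S18.Pd := rfl
  ext w
  simp only [Set.mem_setOf_eq, Set.mem_union, Set.mem_insert_iff, Set.mem_singleton_iff, hP]
  constructor
  · rintro ⟨hm, hnot⟩
    have hcs := S18.matching_to_CS hm
    cases hcs with
    | single h =>
      cases h with
      | zero => exact Or.inl (Or.inl rfl)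
      | two => exact Or.inl (Or.inr (Or.inl rfl))
      | four => exact Or.inl (Or.inr (Or.inr rfl))
      | mid j hj => exact Or.inr ⟨j, hj, rfl⟩
    | cons hu hv =>
      exact absurd ⟨_, _, S18.InS_ne_nil hu, S18.CS_ne_nil hv, S18.matching_InS hu,
        S18.matching_CS hv, rfl⟩ hnot
  · rintro ((rfl | rfl | rfl) | ⟨j, hj, rfl⟩)
    · exact S18.prim_of_InS S18.InS.zero
    · exact S18.prim_of_InS S18.InS.two
    · exact S18.prim_of_InS S18.InS.four
    · exact S18.prim_of_InS (S18.InS.mid j hj)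
end
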